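/- arXiv:1411.6304 — 3 statements merged into one kernel-verified Lean document; each statement's English description precedes it below -/
import Mathlib

section
/- Let λ>0 and let f_∞ be a probability density on the cylinder with M := sup_{k∈ℤ,η∈ℝ} |f̂_∞(k,η)| e^{λ(|k|+|η|)} < ∞ and with f_∞ continuously differentiable with bounded gradient. Then there exists μ₀>0 such that for every 0<μ<μ₀ there exist a measurable z:[0,∞)→ℂ, a map Θ:[0,∞)×ℝ×ℝ→ℝ which is an asymptotic characteristic for z, and a constant C>0, such that: (i) z(t) = ∫_{[0,2π)×ℝ} e^{iΘ(t,ϑ,ω)} f_∞(ϑ,ω) dϑ dω for all t≥0; (ii) |z(t)| ≤ C e^{−λt} for all t≥0; (iii) sup_{ϑ,ω} |Θ(t,ϑ,ω) − ϑ − ωt| ≤ C e^{−λt} for all t≥0; (iv) the function g(t,ϑ,ω) := f_∞(ϑ,ω) exp(−μ ∫_t^∞ Re(e^{iΘ(s,ϑ,ω)} · conj(z(s))) ds), which is the value along characteristics of a solution of the kinetic Kuramoto equation, satisfies sup_{ϑ,ω} |g(t,ϑ,ω) − f_∞(Θ(t,ϑ,ω) − ωt, ω)| ≤ C e^{−λt}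 for all t≥0. -/
open MeasureTheory

noncomputable section

/-- `Θ` is an asymptotic characteristic for the order parameter `z`, with coupling `μ`:
`Θ(t,ϑ,ω) = ϑ + ωt + μ ∫_t^∞ Im(e^{iΘ(s,ϑ,ω)} conj(z s)) ds` for all `t ≥ 0`. -/
def IsAsymChar (μ : ℝ) (z : ℝ → ℂ) (Θ : ℝ → ℝ → ℝ → ℝ) : Prop :=
  ∀ t : ℝ, 0 ≤ t → ∀ ϑ ω : ℝ,
    Θ t ϑ ω = ϑ + ω * t + μ * ∫ s in Set.Ioi t,
      (Complex.exp (Complex.I * (Θ s ϑ ω : ℂ)) * (starRingEnd ℂ) (z s)).im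

/-- The reference measure on the cylinder `[0, 2π) × ℝ`. -/
def cylMeasure : Measure (ℝ × ℝ) :=
  (volume.restrict (Set.Ico 0 (2 * Real.pi))).prod volume

/-- `f` is a probability density on the cylinder: nonnegative, `2π`-periodic in the
first variable, with total integral one over `[0, 2π) × ℝ`. -/
structure IsCylDensity (f : ℝ → ℝ → ℝ) : Prop where
  nonneg : ∀ ϑ ω : ℝ, 0 ≤ f ϑ ω
  periodic : ∀ ϑ ω : ℝ, f (ϑ + 2 * Real.pi) ω = f ϑ ω
  integrable : Integrable (fun p : ℝ × ℝ => f p.1 p.2) cylMeasure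
  integral_one : (∫ p : ℝ × ℝ, f p.1 p.2 ∂cylMeasure) = 1

/-- The Fourier transform `f̂(k,η) = ∫_{[0,2π)×ℝ} f(ϑ,ω) e^{-i(kϑ+ηω)} dϑ dω`. -/
def fHat (f : ℝ → ℝ → ℝ) (k : ℤ) (η : ℝ) : ℂ :=
  ∫ p : ℝ × ℝ, (f p.1 p.2 : ℂ) *
    Complex.exp (-Complex.I * (((k : ℝ) * p.1 + η * p.2 : ℝ) : ℂ)) ∂cylMeasure

/-- The order parameter `w(t) = ∫_{[0,2π)×ℝ} e^{iΘ(t,ϑ,ω)} f(ϑ,ω) dϑ dω`. -/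
def orderParam (f : ℝ → ℝ → ℝ) (Θ : ℝ → ℝ → ℝ → ℝ) (t : ℝ) : ℂ :=
  ∫ p : ℝ × ℝ, Complex.exp (Complex.I * (Θ t p.1 p.2 : ℂ)) * (f p.1 p.2 : ℂ) ∂cylMeasure

/-! ### Auxiliary development -/

open Set Filter

section Aux

lemma expI_lip (a b : ℝ) :
    ‖Complex.exp (Complex.I * a) - Complex.exp (Complex.I * b)‖ ≤ |a - b| := by
  have hder : ∀ x : ℝ, HasDerivAt (fun y : ℝ => Complex.exp (Complex.I * y))
      (Complex.exp (Complex.I * x) * Complex.I) x := by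
    intro x
    have h1 : HasDerivAt (fun y : ℝ => Complex.I * (y : ℂ)) Complex.I x := by
      simpa using (Complex.ofRealCLM.hasDerivAt (x := x)).const_mul Complex.I
    simpa using h1.cexp
  have := Convex.norm_image_sub_le_of_norm_hasDerivWithin_le
    (f := fun y : ℝ => Complex.exp (Complex.I * y))
    (f' := fun x : ℝ => Complex.exp (Complex.I * x) * Complex.I) (C := 1)
    (fun x _ => (hder x).hasDerivWithinAt)
    (fun x _ => by simp [Complex.norm_exp]) convex_univ (mem_univ b) (mem_univ a)
  simpa [Real.norm_eq_abs] using this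

lemma intExpIoi {c : ℝ} (hc : 0 < c) (a : ℝ) :
    ∫ s in Ioi a, Real.exp (-c * s) = Real.exp (-c * a) / c := by
  have hderiv : ∀ x ∈ Ici a, HasDerivAt (fun s : ℝ => -Real.exp (-c * s) / c)
      (Real.exp (-c * x)) x := by
    intro x _
    have h : HasDerivAt (fun s : ℝ => Real.exp (-c * s)) (Real.exp (-c * x) * (-c)) x := by
      simpa using ((hasDerivAt_id x).const_mul (-c)).exp
    have h2 := h.const_mul (-(1/c))
    have e1 : (fun s : ℝ => -(1/c) * Real.exp (-c*s)) = (fun s : ℝ => -Real.exp (-c*s)/c) := by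
      funext s; ring
    have e2 : -(1/c) * (Real.exp (-c*x) * (-c)) = Real.exp (-c*x) := by field_simp
    rw [e1, e2] at h2; exact h2
  have htend : Tendsto (fun s : ℝ => -Real.exp (-c * s) / c) atTop (nhds 0) := by
    have : Tendsto (fun s : ℝ => Real.exp (-c * s)) atTop (nhds 0) := by
      simpa using Real.tendsto_exp_comp_nhds_zero.mpr
        (tendsto_id.const_mul_atTop_of_neg (neg_lt_zero.mpr hc))
    simpa using (this.neg).div_const c
  have := integral_Ioi_of_hasDerivAt_of_tendsto' (m := 0)
      (fun x hx => hderiv x hx) (exp_neg_integrableOn_Ioi a hc) htend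
  rw [this]; field_simp; ring

lemma self_mul_exp_le {c : ℝ} (hc : 0 < c) {s : ℝ} (hs : 0 ≤ s) :
    s * Real.exp (-c * s) ≤ (2 / c) * Real.exp (-(c / 2) * s) := by
  have h1 : (c / 2) * s ≤ Real.exp ((c / 2) * s) := by
    have := Real.add_one_le_exp ((c / 2) * s); linarith
  have h2 : s ≤ (2 / c) * Real.exp ((c / 2) * s) := by
    rw [div_mul_eq_mul_div, le_div_iff₀ hc]
    calc s * c = 2 * ((c/2) * s) := by ring
    _ ≤ 2 * Real.exp ((c/2)*s) := by linarith
  calc s * Real.exp (-c * s) ≤ ((2/c) * Real.exp ((c/2)*s)) * Real.exp (-c*s) := by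
        apply mul_le_mul_of_nonneg_right h2 (Real.exp_nonneg _)
  _ = (2/c) * Real.exp (-(c/2)*s) := by rw [mul_assoc, ← Real.exp_add]; ring_nf

def phaseC (ε : ℝ → ℝ → ℝ → ℝ) (t ϑ ω : ℝ) : ℂ :=
  Complex.exp (Complex.I * ((ϑ + ω * t + ε t ϑ ω : ℝ) : ℂ))

def zOf (f : ℝ → ℝ → ℝ) (ε : ℝ → ℝ → ℝ → ℝ) (t : ℝ) : ℂ :=
  ∫ p : ℝ × ℝ, phaseC ε t p.1 p.2 * (f p.1 p.2 : ℂ) ∂cylMeasure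

def nextE (μ : ℝ) (f : ℝ → ℝ → ℝ) (ε : ℝ → ℝ → ℝ → ℝ) : ℝ → ℝ → ℝ → ℝ :=
  fun t ϑ ω => μ * ∫ s in Set.Ioi (max t 0),
    (phaseC ε s ϑ ω * (starRingEnd ℂ) (zOf f ε s)).im

structure Good (l : ℝ) (ε : ℝ → ℝ → ℝ → ℝ) : Prop where
  bdd : ∀ t ϑ ω, |ε t ϑ ω| ≤ (1/2) * Real.exp (-l * max t 0)
  lipp : ∀ t ϑ ϑ' ω ω', |ε t ϑ ω - ε t ϑ' ω'| ≤ |ϑ - ϑ'| + |ω - ω'|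
  lipt : ∀ t t' ϑ ω, |ε t ϑ ω - ε t' ϑ ω| ≤ l * |t - t'|

lemma Good.zero {l : ℝ} (hl : 0 < l) : Good l (fun _ _ _ => 0) := by
  refine ⟨fun t ϑ ω => by simpa using by positivity, fun _ _ _ _ _ => by simpa using by positivity,
    fun t t' _ _ => by simpa using mul_nonneg hl.le (abs_nonneg (t - t'))⟩

lemma Good.contp {l : ℝ} {ε : ℝ → ℝ → ℝ → ℝ} (hε : Good l ε) (t : ℝ) :
    Continuous fun p : ℝ × ℝ => ε t p.1 p.2 := by
  apply (LipschitzWith.of_dist_le_mul (K := 2) ?_).continuous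
  intro p q
  have h1 := hε.lipp t p.1 q.1 p.2 q.2
  rw [Real.dist_eq, Prod.dist_eq, Real.dist_eq, Real.dist_eq]
  have h2 : |p.1 - q.1| ≤ max |p.1 - q.1| |p.2 - q.2| := le_max_left _ _
  have h3 : |p.2 - q.2| ≤ max |p.1 - q.1| |p.2 - q.2| := le_max_right _ _
  push_cast
  linarith

lemma Good.contt {l : ℝ} {ε : ℝ → ℝ → ℝ → ℝ} (hl : 0 < l) (hε : Good l ε) (ϑ ω : ℝ) :
    Continuous fun t : ℝ => ε t ϑ ω := by
  apply (LipschitzWith.of_dist_le_mul (K := l.toNNReal) ?_).continuous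
  intro t t'
  rw [Real.dist_eq, Real.dist_eq, Real.coe_toNNReal l hl.le]
  exact hε.lipt t t' ϑ ω

lemma contp_phase {l : ℝ} {ε : ℝ → ℝ → ℝ → ℝ} (hε : Good l ε) (t : ℝ) :
    Continuous fun p : ℝ × ℝ => phaseC ε t p.1 p.2 := by
  unfold phaseC
  exact Complex.continuous_exp.comp (continuous_const.mul
    (Complex.continuous_ofReal.comp
      ((continuous_fst.add (continuous_snd.mul continuous_const)).add (hε.contp t))))

lemma contt_phase {l : ℝ} {ε : ℝ → ℝ → ℝ → ℝ} (hl : 0 < l) (hε : Good l ε) (ϑ ω : ℝ) :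
    Continuous fun t : ℝ => phaseC ε t ϑ ω := by
  unfold phaseC
  exact Complex.continuous_exp.comp (continuous_const.mul
    (Complex.continuous_ofReal.comp
      ((continuous_const.add (continuous_const.mul continuous_id)).add (hε.contt hl ϑ ω))))

lemma norm_phase {ε : ℝ → ℝ → ℝ → ℝ} {t ϑ ω : ℝ} : ‖phaseC ε t ϑ ω‖ = 1 := by
  simp [phaseC, Complex.norm_exp]

lemma integrable_phase {f : ℝ → ℝ → ℝ} (hf : IsCylDensity f) {ε : ℝ → ℝ → ℝ → ℝ} {t : ℝ}
    (hc : Continuous fun p : ℝ × ℝ => phaseC ε t p.1 p.2) :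
    Integrable (fun p : ℝ × ℝ => phaseC ε t p.1 p.2 * (f p.1 p.2 : ℂ)) cylMeasure := by
  apply Integrable.mono' hf.integrable
  · exact (hc.aestronglyMeasurable).mul
      (Complex.continuous_ofReal.comp_aestronglyMeasurable hf.integrable.aestronglyMeasurable)
  · filter_upwards with p
    rw [norm_mul, norm_phase, one_mul, Complex.norm_real, Real.norm_eq_abs,
      abs_of_nonneg (hf.nonneg _ _)]



open Set Filter
variable {l M : ℝ} {f : ℝ → ℝ → ℝ} {ε ε' : ℝ → ℝ → ℝ → ℝ}

lemma M_nonneg (hM : ∀ (k : ℤ) (η : ℝ),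
    ‖fHat f k η‖ * Real.exp (l * (|(k : ℝ)| + |η|)) ≤ M) : 0 ≤ M :=
  le_trans (by positivity) (hM 0 0)

lemma zOf_diff_le (hf : IsCylDensity f) {t c : ℝ}
    (hc1 : Continuous fun p : ℝ × ℝ => phaseC ε t p.1 p.2)
    (hc2 : Continuous fun p : ℝ × ℝ => phaseC ε' t p.1 p.2)
    (hb : ∀ ϑ ω, |ε t ϑ ω - ε' t ϑ ω| ≤ c) :
    ‖zOf f ε t - zOf f ε' t‖ ≤ c := by
  have hc0 : 0 ≤ c := le_trans (abs_nonneg _) (hb 0 0)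
  rw [zOf, zOf, ← integral_sub (integrable_phase hf hc1) (integrable_phase hf hc2)]
  simp only [← sub_mul]
  have hbd : ∀ p : ℝ × ℝ, ‖(phaseC ε t p.1 p.2 - phaseC ε' t p.1 p.2) * (f p.1 p.2 : ℂ)‖
      ≤ c * f p.1 p.2 := by
    intro p
    rw [norm_mul, Complex.norm_real, Real.norm_eq_abs, abs_of_nonneg (hf.nonneg _ _)]
    apply mul_le_mul_of_nonneg_right _ (hf.nonneg _ _)
    have h := expI_lip (p.1 + p.2 * t + ε t p.1 p.2) (p.1 + p.2 * t + ε' t p.1 p.2)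
    have harg : p.1 + p.2 * t + ε t p.1 p.2 - (p.1 + p.2 * t + ε' t p.1 p.2)
        = ε t p.1 p.2 - ε' t p.1 p.2 := by ring
    rw [harg] at h
    exact le_trans (le_of_eq rfl) (h.trans (hb p.1 p.2))
  calc ‖∫ p : ℝ × ℝ, (phaseC ε t p.1 p.2 - phaseC ε' t p.1 p.2) * (f p.1 p.2 : ℂ) ∂cylMeasure‖
      ≤ ∫ p : ℝ × ℝ, c * f p.1 p.2 ∂cylMeasure :=
        norm_integral_le_of_norm_le (hf.integrable.const_mul c)
          (Filter.Eventually.of_forall hbd)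
  _ = c := by rw [integral_const_mul, hf.integral_one, mul_one]

end Aux

open Set Filter
variable {l M : ℝ} {f : ℝ → ℝ → ℝ} {ε ε' : ℝ → ℝ → ℝ → ℝ}

lemma zOf_zero_eq (f : ℝ → ℝ → ℝ) (t : ℝ) :
    zOf f (fun _ _ _ => 0) t = fHat f (-1) (-t) := by
  rw [zOf, fHat]
  congr 1; funext p
  simp only [phaseC]
  rw [mul_comm]
  congr 1
  push_cast
  ring_nf

lemma zOf_zero_bound (hl : 0 < l) (hM : ∀ (k : ℤ) (η : ℝ),
      ‖fHat f k η‖ * Real.exp (l * (|(k : ℝ)| + |η|)) ≤ M) (t : ℝ) :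
    ‖zOf f (fun _ _ _ => 0) t‖
      ≤ M * Real.exp (-l) * Real.exp (-l * max t 0) := by
  have hM0 : 0 ≤ M := M_nonneg hM
  rw [zOf_zero_eq]
  have h := hM (-1) (-t)
  have hE : l * (|((-1 : ℤ) : ℝ)| + |(-t)|) = l * (1 + |t|) := by
    push_cast; rw [abs_neg, abs_neg, abs_one]
  rw [hE] at h
  have h1 : ‖fHat f (-1) (-t)‖ ≤ M * Real.exp (-(l * (1 + |t|))) := by
    rw [Real.exp_neg, ← div_eq_mul_inv, le_div_iff₀ (Real.exp_pos _)]
    exact h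
  refine h1.trans ?_
  rw [mul_assoc, ← Real.exp_add]
  apply mul_le_mul_of_nonneg_left _ hM0
  apply Real.exp_le_exp.mpr
  have : max t 0 ≤ |t| := max_le (le_abs_self t) (abs_nonneg t)
  nlinarith [hl.le]

lemma zOf_bound (hl : 0 < l) (hf : IsCylDensity f) (hM : ∀ (k : ℤ) (η : ℝ),
      ‖fHat f k η‖ * Real.exp (l * (|(k : ℝ)| + |η|)) ≤ M)
    (hε : Good l ε) (t : ℝ) :
    ‖zOf f ε t‖ ≤ (M + 1) * Real.exp (-l * max t 0) := by
  have hM0 : 0 ≤ M := M_nonneg hM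
  have h0 : Good l (fun _ _ _ => (0:ℝ)) := Good.zero hl
  have hd := zOf_diff_le (ε := ε) (ε' := fun _ _ _ => 0) hf
    (contp_phase hε t) (contp_phase h0 t)
    (c := (1/2) * Real.exp (-l * max t 0)) (fun ϑ ω => by simpa using hε.bdd t ϑ ω)
  have hz0 := zOf_zero_bound hl hM t
  have htri : ‖zOf f ε t‖ ≤ ‖zOf f ε t - zOf f (fun _ _ _ => 0) t‖
      + ‖zOf f (fun _ _ _ => 0) t‖ := by
    have := norm_add_le (zOf f ε t - zOf f (fun _ _ _ => 0) t)
      (zOf f (fun _ _ _ => 0) t)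
    simpa using this
  have hexp : Real.exp (-l) ≤ 1 := Real.exp_le_one_iff.mpr (by linarith)
  have hE0 : 0 ≤ Real.exp (-l * max t 0) := Real.exp_nonneg _
  calc ‖zOf f ε t‖
      ≤ (1/2) * Real.exp (-l * max t 0) + M * Real.exp (-l) * Real.exp (-l * max t 0) :=
        htri.trans (add_le_add hd hz0)
  _ ≤ (M + 1) * Real.exp (-l * max t 0) := by nlinarith [mul_le_of_le_one_right hM0 hexp]

lemma zOf_cont (hl : 0 < l) (hf : IsCylDensity f) (hε : Good l ε) :
    Continuous (zOf f ε) := by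
  unfold zOf
  apply continuous_of_dominated (bound := fun p : ℝ × ℝ => f p.1 p.2)
  · intro t; exact (integrable_phase hf (contp_phase hε t)).aestronglyMeasurable
  · intro t
    filter_upwards with p
    rw [norm_mul, norm_phase, one_mul, Complex.norm_real, Real.norm_eq_abs,
      abs_of_nonneg (hf.nonneg _ _)]
  · exact hf.integrable
  · filter_upwards with p
    exact (contt_phase hl hε p.1 p.2).mul continuous_const

lemma cont_integrand (hl : 0 < l) (hf : IsCylDensity f) (hε : Good l ε) (ϑ ω : ℝ) :
    Continuous fun s : ℝ => phaseC ε s ϑ ω * (starRingEnd ℂ) (zOf f ε s) :=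
  (contt_phase hl hε ϑ ω).mul (Complex.continuous_conj.comp (zOf_cont hl hf hε))

/-- A generic bound for `g = re` or `g = im`. -/
lemma intOn_g (hl : 0 < l) (hf : IsCylDensity f)
    (hM : ∀ (k : ℤ) (η : ℝ),
      ‖fHat f k η‖ * Real.exp (l * (|(k : ℝ)| + |η|)) ≤ M)
    (hε : Good l ε) (ϑ ω : ℝ) {a : ℝ} (ha : 0 ≤ a)
    {g : ℂ → ℝ} (hgc : Continuous g) (hgle : ∀ w, |g w| ≤ ‖w‖) :
    IntegrableOn (fun s : ℝ => g (phaseC ε s ϑ ω * (starRingEnd ℂ) (zOf f ε s))) (Ioi a) := by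
  apply Integrable.mono' (((exp_neg_integrableOn_Ioi a hl)).const_mul (M+1))
  · exact ((hgc.comp (cont_integrand hl hf hε ϑ ω)).aestronglyMeasurable).restrict
  · filter_upwards [ae_restrict_mem measurableSet_Ioi] with s hs
    rw [Real.norm_eq_abs]
    refine (hgle _).trans ?_
    rw [norm_mul]
    have h1 : ‖phaseC ε s ϑ ω‖ = 1 := by
      exact norm_phase
    rw [h1, one_mul, Complex.norm_conj]
    have := zOf_bound hl hf hM hε s
    rwa [max_eq_left (le_trans ha (le_of_lt hs))] at this

lemma int_Ioi_g_le (hl : 0 < l) (hf : IsCylDensity f)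
    (hM : ∀ (k : ℤ) (η : ℝ),
      ‖fHat f k η‖ * Real.exp (l * (|(k : ℝ)| + |η|)) ≤ M)
    (hε : Good l ε) (ϑ ω : ℝ) {a : ℝ} (ha : 0 ≤ a)
    {g : ℂ → ℝ} (hgle : ∀ w, |g w| ≤ ‖w‖) :
    |∫ s in Ioi a, g (phaseC ε s ϑ ω * (starRingEnd ℂ) (zOf f ε s))|
      ≤ (M + 1) * (Real.exp (-l * a) / l) := by
  have hb : ∀ᵐ s ∂(volume.restrict (Ioi a)),
      ‖g (phaseC ε s ϑ ω * (starRingEnd ℂ) (zOf f ε s))‖ ≤ (M+1) * Real.exp (-l * s) := by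
    filter_upwards [ae_restrict_mem measurableSet_Ioi] with s hs
    rw [Real.norm_eq_abs]
    refine (hgle _).trans ?_
    rw [norm_mul]
    have h1 : ‖phaseC ε s ϑ ω‖ = 1 := by
      exact norm_phase
    rw [h1, one_mul, Complex.norm_conj]
    have := zOf_bound hl hf hM hε s
    rwa [max_eq_left (le_trans ha (le_of_lt hs))] at this
  have := norm_integral_le_of_norm_le (((exp_neg_integrableOn_Ioi a hl)).const_mul (M+1)) hb
  rw [Real.norm_eq_abs] at this
  refine this.trans ?_
  rw [integral_const_mul, intExpIoi hl a]


section Aux4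
open Set Filter
variable {l M : ℝ} {f : ℝ → ℝ → ℝ} {ε : ℝ → ℝ → ℝ → ℝ}

lemma him : ∀ w : ℂ, |w.im| ≤ ‖w‖ := fun w => Complex.abs_im_le_norm w

lemma nextE_good {μ : ℝ} (hl : 0 < l) (hf : IsCylDensity f)
    (hM : ∀ (k : ℤ) (η : ℝ),
      ‖fHat f k η‖ * Real.exp (l * (|(k : ℝ)| + |η|)) ≤ M)
    (hμ : 0 < μ) (hsm : μ * ((M + 2) * (2 * l + 4)) ≤ l ^ 2) (hε : Good l ε) :
    Good l (nextE μ f ε) := by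
  have hM0 : 0 ≤ M := M_nonneg hM
  have hμM12 : μ * (M + 1) * (2 * l + 4) ≤ l ^ 2 := by nlinarith
  have hμM1 : μ * (M + 1) ≤ l / 2 := by nlinarith
  refine ⟨?_, ?_, ?_⟩
  · -- bdd
    intro t ϑ ω
    have ha : (0:ℝ) ≤ max t 0 := le_max_right t 0
    have hint := int_Ioi_g_le hl hf hM hε ϑ ω ha him
    rw [nextE, abs_mul, abs_of_pos hμ]
    have hE := Real.exp_nonneg (-l * max t 0)
    calc μ * |∫ s in Ioi (max t 0), (phaseC ε s ϑ ω * (starRingEnd ℂ) (zOf f ε s)).im|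
        ≤ μ * ((M+1) * (Real.exp (-l * max t 0)/l)) := mul_le_mul_of_nonneg_left hint hμ.le
    _ = (μ * (M+1)) * Real.exp (-l * max t 0) / l := by ring
    _ ≤ 1/2 * Real.exp (-l * max t 0) := by
        rw [div_le_iff₀ hl]
        nlinarith [mul_le_mul_of_nonneg_right hμM1 hE]
  · -- lipp
    intro t ϑ ϑ' ω ω'
    have ha : (0:ℝ) ≤ max t 0 := le_max_right t 0
    set a := max t 0 with ha_def
    set Δ := |ϑ - ϑ'| + |ω - ω'| with hΔ_def
    have hΔ0 : 0 ≤ Δ := by positivity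
    set F1 := fun s : ℝ => (phaseC ε s ϑ ω * (starRingEnd ℂ) (zOf f ε s)).im with hF1
    set F2 := fun s : ℝ => (phaseC ε s ϑ' ω' * (starRingEnd ℂ) (zOf f ε s)).im with hF2
    have hi1 : IntegrableOn F1 (Ioi a) := intOn_g hl hf hM hε ϑ ω ha Complex.continuous_im him
    have hi2 : IntegrableOn F2 (Ioi a) := intOn_g hl hf hM hε ϑ' ω' ha Complex.continuous_im him
    set C1 := (M+1)*Δ*2 with hC1
    set C2 := (M+1)*Δ*(2/l) with hC2
    have hkey : ∀ s ∈ Ioi a, ‖F1 s - F2 s‖ ≤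
        C1 * Real.exp (-l*s) + C2 * Real.exp (-(l/2)*s) := by
      intro s hs
      have hs0 : 0 ≤ s := le_trans ha (le_of_lt hs)
      have hzb := zOf_bound hl hf hM hε s
      rw [max_eq_left hs0] at hzb
      rw [Real.norm_eq_abs]
      have hsub : F1 s - F2 s =
          ((phaseC ε s ϑ ω - phaseC ε s ϑ' ω') * (starRingEnd ℂ) (zOf f ε s)).im := by
        simp [hF1, hF2, sub_mul, Complex.sub_im]
      have hw : |F1 s - F2 s| ≤ (|ϑ - ϑ'| + |ω - ω'| * s + Δ) * ((M+1) * Real.exp (-l*s)) := by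
        rw [hsub]
        refine (Complex.abs_im_le_norm _).trans ?_
        rw [norm_mul, Complex.norm_conj]
        have hphase : ‖phaseC ε s ϑ ω - phaseC ε s ϑ' ω'‖
            ≤ |ϑ - ϑ'| + |ω - ω'| * s + Δ := by
          have h := expI_lip (ϑ + ω*s + ε s ϑ ω) (ϑ' + ω'*s + ε s ϑ' ω')
          have harg : |ϑ + ω*s + ε s ϑ ω - (ϑ' + ω'*s + ε s ϑ' ω')|
              ≤ |ϑ - ϑ'| + |ω - ω'| * s + Δ := by
            have e1 : ϑ + ω*s + ε s ϑ ω - (ϑ' + ω'*s + ε s ϑ' ω')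
                = (ϑ - ϑ') + ((ω - ω')*s + (ε s ϑ ω - ε s ϑ' ω')) := by ring
            rw [e1]
            refine (abs_add_le _ _).trans ?_
            have h2 := abs_add_le ((ω - ω')*s) (ε s ϑ ω - ε s ϑ' ω')
            have hl2 := hε.lipp s ϑ ϑ' ω ω'
            rw [abs_mul, abs_of_nonneg hs0] at h2
            rw [← hΔ_def] at hl2
            linarith
          exact le_trans (le_of_eq rfl) (h.trans harg)
        apply mul_le_mul hphase hzb (norm_nonneg _) (by positivity)
      refine hw.trans ?_
      have hse := self_mul_exp_le hl hs0
      have hE := Real.exp_nonneg (-l*s)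
      have hΔϑ : |ϑ - ϑ'| ≤ Δ := le_add_of_nonneg_right (abs_nonneg _)
      have hΔω : |ω - ω'| ≤ Δ := le_add_of_nonneg_left (abs_nonneg _)
      calc (|ϑ - ϑ'| + |ω - ω'| * s + Δ) * ((M+1) * Real.exp (-l*s))
          ≤ (Δ + Δ * s + Δ) * ((M+1) * Real.exp (-l*s)) := by
            apply mul_le_mul_of_nonneg_right _ (by positivity)
            have : |ω - ω'| * s ≤ Δ * s := mul_le_mul_of_nonneg_right hΔω hs0
            linarith
      _ = C1 * Real.exp (-l*s) + ((M+1)*Δ) * (s * Real.exp (-l*s)) := by rw [hC1]; ring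
      _ ≤ C1 * Real.exp (-l*s) + ((M+1)*Δ) * ((2/l) * Real.exp (-(l/2)*s)) := by
            have := mul_le_mul_of_nonneg_left hse (by positivity : (0:ℝ) ≤ (M+1)*Δ)
            linarith
      _ = C1 * Real.exp (-l*s) + C2 * Real.exp (-(l/2)*s) := by rw [hC2]; ring
    have hbint : Integrable
        (fun s : ℝ => C1 * Real.exp (-l*s) + C2 * Real.exp (-(l/2)*s))
        (volume.restrict (Ioi a)) :=
      ((exp_neg_integrableOn_Ioi a hl).const_mul _).add
        ((exp_neg_integrableOn_Ioi a (half_pos hl)).const_mul _)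
    have h1 : ‖∫ s in Ioi a, (F1 s - F2 s)‖ ≤
        ∫ s in Ioi a, (C1 * Real.exp (-l*s) + C2 * Real.exp (-(l/2)*s)) := by
      apply norm_integral_le_of_norm_le hbint
      filter_upwards [ae_restrict_mem measurableSet_Ioi] with s hs using hkey s hs
    have h2 : ∫ s in Ioi a, (C1 * Real.exp (-l*s) + C2 * Real.exp (-(l/2)*s))
        = C1 * (Real.exp (-l*a)/l) + C2 * (Real.exp (-(l/2)*a)/(l/2)) := by
      rw [integral_add ((exp_neg_integrableOn_Ioi a hl).const_mul _)
        ((exp_neg_integrableOn_Ioi a (half_pos hl)).const_mul _),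
        integral_const_mul, integral_const_mul, intExpIoi hl, intExpIoi (half_pos hl)]
    have hgoal : |nextE μ f ε t ϑ ω - nextE μ f ε t ϑ' ω'|
        = μ * ‖∫ s in Ioi a, (F1 s - F2 s)‖ := by
      rw [nextE, nextE, ← mul_sub, abs_mul, abs_of_pos hμ, integral_sub hi1 hi2,
        Real.norm_eq_abs]
    rw [hgoal]
    have hEa1 : Real.exp (-l*a) ≤ 1 := Real.exp_le_one_iff.mpr (by nlinarith)
    have hEa2 : Real.exp (-(l/2)*a) ≤ 1 := Real.exp_le_one_iff.mpr (by nlinarith)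
    have hl0 : l ≠ 0 := ne_of_gt hl
    have hfin : μ * (C1 * (Real.exp (-l*a)/l) + C2 * (Real.exp (-(l/2)*a)/(l/2))) ≤ Δ := by
      have hC10 : 0 ≤ C1 := by rw [hC1]; positivity
      have hC20 : 0 ≤ C2 := by rw [hC2]; positivity
      have hstep : C1 * (Real.exp (-l*a)/l) + C2 * (Real.exp (-(l/2)*a)/(l/2))
          ≤ C1 * (1/l) + C2 * (1/(l/2)) := by
        gcongr
      have heq : μ * (C1 * (1/l) + C2 * (1/(l/2)))
          = (μ * (M+1) * (2*l+4) / l^2) * Δ := by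
        rw [hC1, hC2]; field_simp; ring
      have hle1 : μ * (M+1) * (2*l+4) / l^2 ≤ 1 := by
        rw [div_le_one (by positivity)]; exact hμM12
      calc μ * (C1 * (Real.exp (-l*a)/l) + C2 * (Real.exp (-(l/2)*a)/(l/2)))
          ≤ μ * (C1 * (1/l) + C2 * (1/(l/2))) := mul_le_mul_of_nonneg_left hstep hμ.le
      _ = (μ * (M+1) * (2*l+4) / l^2) * Δ := heq
      _ ≤ 1 * Δ := mul_le_mul_of_nonneg_right hle1 hΔ0
      _ = Δ := one_mul Δ
    calc μ * ‖∫ s in Ioi a, (F1 s - F2 s)‖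
        ≤ μ * (C1 * (Real.exp (-l*a)/l) + C2 * (Real.exp (-(l/2)*a)/(l/2))) := by
          rw [← h2]; exact mul_le_mul_of_nonneg_left h1 hμ.le
    _ ≤ Δ := hfin
  · -- lipt
    intro t t' ϑ ω
    have key : ∀ u v : ℝ, max u 0 ≤ max v 0 →
        |nextE μ f ε u ϑ ω - nextE μ f ε v ϑ ω| ≤ μ * (M+1) * (max v 0 - max u 0) := by
      intro u v hab
      set a := max u 0 with ha_def
      set b := max v 0 with hb_def
      have ha : (0:ℝ) ≤ a := le_max_right u 0
      set F := fun s : ℝ => (phaseC ε s ϑ ω * (starRingEnd ℂ) (zOf f ε s)).im with hF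
      have hiIoc : IntegrableOn F (Ioc a b) :=
        (intOn_g hl hf hM hε ϑ ω ha Complex.continuous_im him).mono_set Ioc_subset_Ioi_self
      have hiIoi : IntegrableOn F (Ioi b) :=
        intOn_g hl hf hM hε ϑ ω (le_trans ha hab) Complex.continuous_im him
      have hsplit : ∫ s in Ioi a, F s = (∫ s in Ioc a b, F s) + ∫ s in Ioi b, F s := by
        rw [← setIntegral_union (Ioc_disjoint_Ioi le_rfl) measurableSet_Ioi hiIoc hiIoi,
          Ioc_union_Ioi_eq_Ioi hab]
      have e1 : nextE μ f ε u ϑ ω = μ * ∫ s in Ioi a, F s := rfl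
      have e2 : nextE μ f ε v ϑ ω = μ * ∫ s in Ioi b, F s := rfl
      have hd : nextE μ f ε u ϑ ω - nextE μ f ε v ϑ ω = μ * ∫ s in Ioc a b, F s := by
        rw [e1, e2, hsplit]; ring
      rw [hd, abs_mul, abs_of_pos hμ]
      have hbound : ‖∫ s in Ioc a b, F s‖ ≤ ∫ _ in Ioc a b, (M+1) := by
        apply norm_integral_le_of_norm_le
          (integrableOn_const measure_Ioc_lt_top.ne)
        filter_upwards [ae_restrict_mem measurableSet_Ioc] with s hs
        have hs0 : 0 ≤ s := le_trans ha (le_of_lt hs.1)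
        rw [Real.norm_eq_abs]
        refine (Complex.abs_im_le_norm _).trans ?_
        rw [norm_mul, Complex.norm_conj]
        have h1 : ‖phaseC ε s ϑ ω‖ = 1 := by
          exact norm_phase
        rw [h1, one_mul]
        have hzb := zOf_bound hl hf hM hε s
        rw [max_eq_left hs0] at hzb
        refine hzb.trans ?_
        have : Real.exp (-l*s) ≤ 1 := Real.exp_le_one_iff.mpr (by nlinarith)
        nlinarith
      have hconst : (∫ _ in Ioc a b, (M+1) : ℝ) = (M+1) * (b - a) := by
        rw [setIntegral_const, Real.volume_real_Ioc_of_le hab,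
          smul_eq_mul, mul_comm]
      rw [hconst] at hbound
      rw [Real.norm_eq_abs] at hbound
      calc μ * |∫ s in Ioc a b, F s| ≤ μ * ((M+1) * (b - a)) :=
            mul_le_mul_of_nonneg_left hbound hμ.le
      _ = μ * (M+1) * (b - a) := by ring
    rcases le_total (max t 0) (max t' 0) with h | h
    · have h1 := key t t' h
      refine h1.trans ?_
      have h2 : max t' 0 - max t 0 ≤ |t - t'| := by
        have h3 := abs_max_sub_max_le_abs t' t 0
        rw [abs_sub_comm t' t] at h3
        exact le_trans (le_abs_self _) h3
      nlinarith [mul_le_mul_of_nonneg_right hμM1 (sub_nonneg.mpr h),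
        mul_le_mul_of_nonneg_left h2 (le_of_lt (half_pos hl)), abs_nonneg (t - t')]
    · rw [abs_sub_comm]
      have h1 := key t' t h
      refine h1.trans ?_
      have h2 : max t 0 - max t' 0 ≤ |t - t'| := by
        have h3 := abs_max_sub_max_le_abs t t' 0
        exact le_trans (le_abs_self _) h3
      nlinarith [mul_le_mul_of_nonneg_right hμM1 (sub_nonneg.mpr h),
        mul_le_mul_of_nonneg_left h2 (le_of_lt (half_pos hl)), abs_nonneg (t - t')]

end Aux4
section Aux5
open Set Filter
variable {l M : ℝ} {f : ℝ → ℝ → ℝ} {ε ε' : ℝ → ℝ → ℝ → ℝ}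

lemma nextE_contract {μ c : ℝ} (hl : 0 < l) (hf : IsCylDensity f)
    (hM : ∀ (k : ℤ) (η : ℝ),
      ‖fHat f k η‖ * Real.exp (l * (|(k : ℝ)| + |η|)) ≤ M)
    (hμ : 0 < μ) (hsm : μ * ((M + 2) * (2 * l + 4)) ≤ l ^ 2)
    (hε : Good l ε) (hε' : Good l ε') (hc : 0 ≤ c)
    (hd : ∀ t ϑ ω, |ε t ϑ ω - ε' t ϑ ω| ≤ c * Real.exp (-l * max t 0)) :
    ∀ t ϑ ω, |nextE μ f ε t ϑ ω - nextE μ f ε' t ϑ ω|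
      ≤ (c/2) * Real.exp (-l * max t 0) := by
  have hM0 : 0 ≤ M := M_nonneg hM
  have hμM2 : μ * (M + 2) ≤ l / 2 := by nlinarith
  intro t ϑ ω
  have ha : (0:ℝ) ≤ max t 0 := le_max_right t 0
  set a := max t 0 with ha_def
  set F1 := fun s : ℝ => (phaseC ε s ϑ ω * (starRingEnd ℂ) (zOf f ε s)).im with hF1
  set F2 := fun s : ℝ => (phaseC ε' s ϑ ω * (starRingEnd ℂ) (zOf f ε' s)).im with hF2
  have hi1 : IntegrableOn F1 (Ioi a) := intOn_g hl hf hM hε ϑ ω ha Complex.continuous_im him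
  have hi2 : IntegrableOn F2 (Ioi a) := intOn_g hl hf hM hε' ϑ ω ha Complex.continuous_im him
  have hkey : ∀ s ∈ Ioi a, ‖F1 s - F2 s‖ ≤ (c * (M+2)) * Real.exp (-l*s) := by
    intro s hs
    have hs0 : 0 ≤ s := le_trans ha (le_of_lt hs)
    have hzb := zOf_bound hl hf hM hε s
    rw [max_eq_left hs0] at hzb
    have hzd := zOf_diff_le (ε := ε) (ε' := ε') hf (contp_phase hε s) (contp_phase hε' s)
      (c := c * Real.exp (-l * s)) (fun ϑ ω => by
        have := hd s ϑ ω; rwa [max_eq_left hs0] at this)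
    rw [Real.norm_eq_abs]
    have hsplit : F1 s - F2 s =
        ((phaseC ε s ϑ ω - phaseC ε' s ϑ ω) * (starRingEnd ℂ) (zOf f ε s)).im
        + (phaseC ε' s ϑ ω * ((starRingEnd ℂ) (zOf f ε s) - (starRingEnd ℂ) (zOf f ε' s))).im := by
      simp only [hF1, hF2, ← Complex.sub_im, ← Complex.add_im]
      congr 1
      ring
    rw [hsplit]
    have hE := Real.exp_nonneg (-l*s)
    have hE1 : Real.exp (-l*s) ≤ 1 := Real.exp_le_one_iff.mpr (by nlinarith)
    have hp1 : |((phaseC ε s ϑ ω - phaseC ε' s ϑ ω) * (starRingEnd ℂ) (zOf f ε s)).im|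
        ≤ (c * Real.exp (-l*s)) * ((M+1) * Real.exp (-l*s)) := by
      refine (Complex.abs_im_le_norm _).trans ?_
      rw [norm_mul, Complex.norm_conj]
      apply mul_le_mul _ hzb (norm_nonneg _) (by positivity)
      have h := expI_lip (ϑ + ω*s + ε s ϑ ω) (ϑ + ω*s + ε' s ϑ ω)
      have harg : ϑ + ω*s + ε s ϑ ω - (ϑ + ω*s + ε' s ϑ ω) = ε s ϑ ω - ε' s ϑ ω := by ring
      rw [harg] at h
      exact le_trans (le_of_eq rfl) (h.trans (by
        have := hd s ϑ ω; rwa [max_eq_left hs0] at this))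
    have hp2 : |(phaseC ε' s ϑ ω * ((starRingEnd ℂ) (zOf f ε s) - (starRingEnd ℂ) (zOf f ε' s))).im|
        ≤ c * Real.exp (-l*s) := by
      refine (Complex.abs_im_le_norm _).trans ?_
      rw [norm_mul]
      have h1 : ‖phaseC ε' s ϑ ω‖ = 1 := by
        exact norm_phase
      rw [h1, one_mul, ← map_sub, Complex.norm_conj]
      exact hzd
    calc |((phaseC ε s ϑ ω - phaseC ε' s ϑ ω) * (starRingEnd ℂ) (zOf f ε s)).im
        + (phaseC ε' s ϑ ω * ((starRingEnd ℂ) (zOf f ε s) - (starRingEnd ℂ) (zOf f ε' s))).im|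
        ≤ (c * Real.exp (-l*s)) * ((M+1) * Real.exp (-l*s)) + c * Real.exp (-l*s) := by
          refine (abs_add_le _ _).trans (add_le_add hp1 hp2)
    _ ≤ (c * (M+2)) * Real.exp (-l*s) := by
          nlinarith [mul_le_mul_of_nonneg_left hE1
            (by positivity : (0:ℝ) ≤ c * ((M+1) * Real.exp (-l*s)))]
  have hbint : Integrable (fun s : ℝ => (c * (M+2)) * Real.exp (-l*s))
      (volume.restrict (Ioi a)) := (exp_neg_integrableOn_Ioi a hl).const_mul _
  have h1 : ‖∫ s in Ioi a, (F1 s - F2 s)‖ ≤ ∫ s in Ioi a, (c * (M+2)) * Real.exp (-l*s) := by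
    apply norm_integral_le_of_norm_le hbint
    filter_upwards [ae_restrict_mem measurableSet_Ioi] with s hs using hkey s hs
  have h2 : ∫ s in Ioi a, (c * (M+2)) * Real.exp (-l*s)
      = (c * (M+2)) * (Real.exp (-l*a)/l) := by
    rw [integral_const_mul, intExpIoi hl]
  have hgoal : |nextE μ f ε t ϑ ω - nextE μ f ε' t ϑ ω|
      = μ * ‖∫ s in Ioi a, (F1 s - F2 s)‖ := by
    rw [nextE, nextE, ← mul_sub, abs_mul, abs_of_pos hμ, integral_sub hi1 hi2,
      Real.norm_eq_abs]
  rw [hgoal]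
  have hE := Real.exp_nonneg (-l*a)
  calc μ * ‖∫ s in Ioi a, (F1 s - F2 s)‖ ≤ μ * ((c * (M+2)) * (Real.exp (-l*a)/l)) := by
        rw [← h2]; exact mul_le_mul_of_nonneg_left h1 hμ.le
  _ ≤ (c/2) * Real.exp (-l*a) := by
      rw [show μ * (c * (M+2) * (Real.exp (-l*a)/l)) = μ * (c * (M+2)) * Real.exp (-l*a) / l
        from by ring, div_le_iff₀ hl]
      nlinarith [mul_le_mul_of_nonneg_left hμM2 (mul_nonneg hc hE)]
  _ = (c/2) * Real.exp (-l * max t 0) := rfl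

end Aux5
section Aux6
open Set Filter
variable {l M : ℝ} {f : ℝ → ℝ → ℝ}

def eSeq (μ : ℝ) (f : ℝ → ℝ → ℝ) : ℕ → (ℝ → ℝ → ℝ → ℝ)
  | 0 => fun _ _ _ => 0
  | n+1 => nextE μ f (eSeq μ f n)

def eL (μ : ℝ) (f : ℝ → ℝ → ℝ) : ℝ → ℝ → ℝ → ℝ := fun t ϑ ω =>
  ∑' n : ℕ, (eSeq μ f (n+1) t ϑ ω - eSeq μ f n t ϑ ω)

variable {μ : ℝ}

section seq

variable (hl : 0 < l) (hf : IsCylDensity f)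
  (hM : ∀ (k : ℤ) (η : ℝ),
    ‖fHat f k η‖ * Real.exp (l * (|(k : ℝ)| + |η|)) ≤ M)
  (hμ : 0 < μ) (hsm : μ * ((M + 2) * (2 * l + 4)) ≤ l ^ 2)

include hl hf hM hμ hsm

lemma eSeq_good : ∀ n, Good l (eSeq μ f n) := by
  intro n
  induction n with
  | zero => exact Good.zero hl
  | succ n ih => exact nextE_good hl hf hM hμ hsm ih

lemma eSeq_diff : ∀ n (t ϑ ω : ℝ), |eSeq μ f (n+1) t ϑ ω - eSeq μ f n t ϑ ω|
    ≤ (1/2)^n * Real.exp (-l * max t 0) := by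
  intro n
  induction n with
  | zero =>
    intro t ϑ ω
    have h := (eSeq_good hl hf hM hμ hsm 1).bdd t ϑ ω
    have h2 : ((1:ℝ)/2) ≤ (1/2)^0 := by norm_num
    simp only [eSeq, sub_zero] at h ⊢
    exact h.trans (mul_le_mul_of_nonneg_right h2 (Real.exp_nonneg _))
  | succ n ih =>
    intro t ϑ ω
    have h := nextE_contract hl hf hM hμ hsm (eSeq_good hl hf hM hμ hsm (n+1))
      (eSeq_good hl hf hM hμ hsm n) (by positivity) ih t ϑ ω
    have e : ((1/2:ℝ)^n)/2 = (1/2)^(n+1) := by rw [pow_succ]; ring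
    rw [e] at h
    exact h

lemma eSeq_summable (t ϑ ω : ℝ) :
    Summable (fun n : ℕ => eSeq μ f (n+1) t ϑ ω - eSeq μ f n t ϑ ω) := by
  apply Summable.of_norm_bounded (g := fun n : ℕ => (1/2)^n * Real.exp (-l * max t 0))
  · exact (summable_geometric_of_lt_one (by norm_num) (by norm_num)).mul_right _
  · intro n
    rw [Real.norm_eq_abs]
    exact eSeq_diff hl hf hM hμ hsm n t ϑ ω

lemma eSeq_tendsto (t ϑ ω : ℝ) :
    Tendsto (fun n => eSeq μ f n t ϑ ω) atTop (nhds (eL μ f t ϑ ω)) := by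
  have h := (eSeq_summable hl hf hM hμ hsm t ϑ ω).hasSum.tendsto_sum_nat
  have he : ∀ n, ∑ i ∈ Finset.range n, (eSeq μ f (i+1) t ϑ ω - eSeq μ f i t ϑ ω)
      = eSeq μ f n t ϑ ω := by
    intro n
    rw [Finset.sum_range_sub (f := fun i => eSeq μ f i t ϑ ω)]
    simp [eSeq]
  rw [show (fun n => ∑ i ∈ Finset.range n, (eSeq μ f (i+1) t ϑ ω - eSeq μ f i t ϑ ω))
    = fun n => eSeq μ f n t ϑ ω from funext he] at h
  exact h

lemma eSeq_tail (n : ℕ) (t ϑ ω : ℝ) :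
    |eL μ f t ϑ ω - eSeq μ f n t ϑ ω| ≤ 2 * (1/2)^n * Real.exp (-l * max t 0) := by
  set E := Real.exp (-l * max t 0) with hE_def
  have hE : 0 ≤ E := Real.exp_nonneg _
  have hsum := eSeq_summable hl hf hM hμ hsm t ϑ ω
  have hpart := Summable.sum_add_tsum_nat_add n hsum
  have he : ∑ i ∈ Finset.range n, (eSeq μ f (i+1) t ϑ ω - eSeq μ f i t ϑ ω)
      = eSeq μ f n t ϑ ω := by
    rw [Finset.sum_range_sub (f := fun i => eSeq μ f i t ϑ ω)]
    simp [eSeq]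
  rw [he] at hpart
  have htail : eL μ f t ϑ ω - eSeq μ f n t ϑ ω
      = ∑' i : ℕ, (eSeq μ f (i+n+1) t ϑ ω - eSeq μ f (i+n) t ϑ ω) := by
    rw [eL]; linarith [hpart]
  rw [htail]
  have hb : ∀ i : ℕ, |eSeq μ f (i+n+1) t ϑ ω - eSeq μ f (i+n) t ϑ ω|
      ≤ ((1/2)^n * E) * (1/2)^i := by
    intro i
    have := eSeq_diff hl hf hM hμ hsm (i+n) t ϑ ω
    rw [pow_add] at this
    calc |eSeq μ f (i+n+1) t ϑ ω - eSeq μ f (i+n) t ϑ ω| ≤ (1/2)^i * (1/2)^n * E := this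
    _ = ((1/2)^n * E) * (1/2)^i := by ring
  have hsums : Summable (fun i : ℕ => ((1/2:ℝ)^n * E) * (1/2)^i) :=
    (summable_geometric_of_lt_one (by norm_num) (by norm_num)).mul_left _
  have hsumn : Summable (fun i : ℕ => ‖eSeq μ f (i+n+1) t ϑ ω - eSeq μ f (i+n) t ϑ ω‖) := by
    apply Summable.of_nonneg_of_le (fun i => norm_nonneg _) _ hsums
    intro i
    rw [Real.norm_eq_abs]
    exact hb i
  calc |∑' i : ℕ, (eSeq μ f (i+n+1) t ϑ ω - eSeq μ f (i+n) t ϑ ω)|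
      ≤ ∑' i : ℕ, ‖eSeq μ f (i+n+1) t ϑ ω - eSeq μ f (i+n) t ϑ ω‖ := by
        rw [← Real.norm_eq_abs]
        exact norm_tsum_le_tsum_norm hsumn
  _ ≤ ∑' i : ℕ, ((1/2:ℝ)^n * E) * (1/2)^i := by
        apply Summable.tsum_le_tsum _ hsumn hsums
        intro i
        rw [Real.norm_eq_abs]
        exact hb i
  _ = ((1/2:ℝ)^n * E) * 2 := by rw [tsum_mul_left, tsum_geometric_two]
  _ = 2 * (1/2)^n * E := by ring

lemma eL_good : Good l (eL μ f) := by
  refine ⟨?_, ?_, ?_⟩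
  · intro t ϑ ω
    exact le_of_tendsto ((eSeq_tendsto hl hf hM hμ hsm t ϑ ω).abs)
      (Eventually.of_forall (fun n => (eSeq_good hl hf hM hμ hsm n).bdd t ϑ ω))
  · intro t ϑ ϑ' ω ω'
    exact le_of_tendsto (((eSeq_tendsto hl hf hM hμ hsm t ϑ ω).sub
      (eSeq_tendsto hl hf hM hμ hsm t ϑ' ω')).abs)
      (Eventually.of_forall (fun n => (eSeq_good hl hf hM hμ hsm n).lipp t ϑ ϑ' ω ω'))
  · intro t t' ϑ ω
    exact le_of_tendsto (((eSeq_tendsto hl hf hM hμ hsm t ϑ ω).sub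
      (eSeq_tendsto hl hf hM hμ hsm t' ϑ ω)).abs)
      (Eventually.of_forall (fun n => (eSeq_good hl hf hM hμ hsm n).lipt t t' ϑ ω))

lemma eL_fix : ∀ t ϑ ω : ℝ, eL μ f t ϑ ω = nextE μ f (eL μ f) t ϑ ω := by
  intro t ϑ ω
  set E := Real.exp (-l * max t 0) with hE_def
  have hE : 0 ≤ E := Real.exp_nonneg _
  have hkey : ∀ n : ℕ, |eL μ f t ϑ ω - nextE μ f (eL μ f) t ϑ ω| ≤ (1/2)^n * (2*E) := by
    intro n
    have h1 := eSeq_tail hl hf hM hμ hsm (n+1) t ϑ ω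
    have h2 := nextE_contract hl hf hM hμ hsm (eSeq_good hl hf hM hμ hsm n)
      (eL_good hl hf hM hμ hsm) (c := 2 * (1/2)^n) (by positivity)
      (fun s θ w => by
        rw [abs_sub_comm]
        exact eSeq_tail hl hf hM hμ hsm n s θ w) t ϑ ω
    have h3 : |eL μ f t ϑ ω - nextE μ f (eL μ f) t ϑ ω|
        ≤ |eL μ f t ϑ ω - eSeq μ f (n+1) t ϑ ω|
          + |eSeq μ f (n+1) t ϑ ω - nextE μ f (eL μ f) t ϑ ω| := abs_sub_le _ _ _
    have he : eSeq μ f (n+1) t ϑ ω = nextE μ f (eSeq μ f n) t ϑ ω := rfl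
    rw [he] at h3
    have e1 : 2 * (1/2:ℝ)^(n+1) = (1/2)^n := by rw [pow_succ]; ring
    have e2 : (2 * (1/2:ℝ)^n)/2 = (1/2)^n := by ring
    rw [e1] at h1
    rw [e2] at h2
    calc |eL μ f t ϑ ω - nextE μ f (eL μ f) t ϑ ω|
        ≤ (1/2)^n * E + (1/2)^n * E := by
          refine h3.trans (add_le_add h1 h2)
    _ = (1/2)^n * (2*E) := by ring
  have hten : Tendsto (fun n : ℕ => ((1/2:ℝ))^n * (2*E)) atTop (nhds 0) := by
    simpa using (tendsto_pow_atTop_nhds_zero_of_lt_one (by norm_num : (0:ℝ) ≤ 1/2)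
      (by norm_num : (1/2:ℝ) < 1)).mul_const (2*E)
  have h0 : |eL μ f t ϑ ω - nextE μ f (eL μ f) t ϑ ω| ≤ 0 :=
    le_of_tendsto_of_tendsto' tendsto_const_nhds hten hkey
  have := abs_nonneg (eL μ f t ϑ ω - nextE μ f (eL μ f) t ϑ ω)
  have heq : |eL μ f t ϑ ω - nextE μ f (eL μ f) t ϑ ω| = 0 := le_antisymm h0 this
  rw [abs_eq_zero, sub_eq_zero] at heq
  exact heq

end seq
end Aux6
section Aux7
open Set Filter
variable {f : ℝ → ℝ → ℝ}

lemma f_bdd (hf : IsCylDensity f) (hreg : ContDiff ℝ 1 (fun p : ℝ × ℝ => f p.1 p.2))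
    {K : ℝ} (hK : ∀ p : ℝ × ℝ, ‖fderiv ℝ (fun q : ℝ × ℝ => f q.1 q.2) p‖ ≤ K) :
    ∀ ϑ ω : ℝ, f ϑ ω ≤ 2 * Real.pi * max K 1 := by
  set K' := max K 1 with hK'_def
  have hK'1 : (1:ℝ) ≤ K' := le_max_right _ _
  have hK'0 : (0:ℝ) < K' := lt_of_lt_of_le one_pos hK'1
  have hπ : (0:ℝ) < Real.pi := Real.pi_pos
  have hπ3 : (3:ℝ) < Real.pi := Real.pi_gt_three
  have hmv : ∀ x y : ℝ × ℝ, |f x.1 x.2 - f y.1 y.2| ≤ K' * ‖x - y‖ := by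
    intro x y
    have := Convex.norm_image_sub_le_of_norm_fderiv_le
      (f := fun p : ℝ × ℝ => f p.1 p.2) (C := K')
      (fun p _ => (hreg.differentiable one_ne_zero).differentiableAt)
      (fun p _ => le_trans (hK p) (le_max_left _ _)) convex_univ (mem_univ y) (mem_univ x)
    simpa [Real.norm_eq_abs] using this
  by_contra hcon
  push_neg at hcon
  obtain ⟨ϑ₀, ω₀, hV⟩ := hcon
  set V := f ϑ₀ ω₀ with hV_def
  have h2π : (0:ℝ) < 2 * Real.pi := by positivity
  set n : ℤ := ⌊ϑ₀ / (2 * Real.pi)⌋ with hn_def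
  set ϑ₁ := ϑ₀ - n * (2 * Real.pi) with hϑ₁_def
  have hfper : Function.Periodic (fun ϑ => f ϑ ω₀) (2 * Real.pi) := fun ϑ => hf.periodic ϑ ω₀
  have hfeq : f ϑ₁ ω₀ = V := hfper.sub_int_mul_eq n
  have hϑ₁0 : 0 ≤ ϑ₁ := Int.sub_floor_div_mul_nonneg ϑ₀ h2π
  have hϑ₁2 : ϑ₁ < 2 * Real.pi := Int.sub_floor_div_mul_lt ϑ₀ h2π
  -- choose the ϑ-interval
  obtain ⟨a, ha0, ha2, hadist⟩ : ∃ a : ℝ, 0 ≤ a ∧ a + Real.pi ≤ 2 * Real.pi ∧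
      ∀ ϑ ∈ Ico a (a + Real.pi), |ϑ - ϑ₁| ≤ Real.pi := by
    rcases le_or_gt ϑ₁ Real.pi with h | h
    · refine ⟨ϑ₁, hϑ₁0, by linarith, ?_⟩
      intro ϑ hϑ
      rw [abs_le]
      constructor <;> [linarith [hϑ.1]; linarith [hϑ.2]]
    · refine ⟨ϑ₁ - Real.pi, by linarith, by linarith, ?_⟩
      intro ϑ hϑ
      rw [abs_le]
      have h1 := hϑ.1
      have h2 := hϑ.2
      constructor <;> [linarith; linarith]
  set S : Set (ℝ × ℝ) := (Ico a (a + Real.pi)) ×ˢ (Ico ω₀ (ω₀ + Real.pi)) with hS_def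
  have hSmeas : MeasurableSet S := measurableSet_Ico.prod measurableSet_Ico
  -- lower bound for f on S
  have hlow : ∀ p ∈ S, Real.pi ≤ f p.1 p.2 := by
    intro p hp
    have hd : ‖p - (ϑ₁, ω₀)‖ ≤ Real.pi := by
      rw [Prod.norm_def]
      apply max_le
      · simpa [Real.norm_eq_abs] using hadist p.1 hp.1
      · have h1 := hp.2.1
        have h2 := hp.2.2
        rw [Real.norm_eq_abs, abs_le]
        constructor <;> simp at h1 h2 ⊢ <;> linarith
    have := hmv p (ϑ₁, ω₀)
    have hfp : f ϑ₁ ω₀ - K' * Real.pi ≤ f p.1 p.2 := by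
      have habs := abs_le.mp (hmv p (ϑ₁, ω₀))
      have := mul_le_mul_of_nonneg_left hd hK'0.le
      linarith [habs.1]
    rw [hfeq] at hfp
    have hKpi : 2 * Real.pi * K' - K' * Real.pi = K' * Real.pi := by ring
    nlinarith
  -- measure of S
  have hcylS : cylMeasure S = ENNReal.ofReal Real.pi * ENNReal.ofReal Real.pi := by
    rw [hS_def, cylMeasure, Measure.prod_prod, Measure.restrict_apply measurableSet_Ico]
    have hsub : Ico a (a + Real.pi) ∩ Ico 0 (2 * Real.pi) = Ico a (a + Real.pi) := by
      apply inter_eq_self_of_subset_left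
      intro x hx
      exact ⟨le_trans ha0 hx.1, lt_of_lt_of_le hx.2 ha2⟩
    rw [hsub, Real.volume_Ico, Real.volume_Ico]
    norm_num
  have hSfin : cylMeasure S ≠ ⊤ := by
    rw [hcylS]; exact ENNReal.mul_ne_top ENNReal.ofReal_ne_top ENNReal.ofReal_ne_top
  have hSint : IntegrableOn (fun p : ℝ × ℝ => f p.1 p.2) S cylMeasure :=
    hf.integrable.integrableOn
  have hge := setIntegral_ge_of_const_le (μ := cylMeasure) (c := Real.pi) hSmeas hSfin hlow hSint
  have htot : ∫ p in S, f p.1 p.2 ∂cylMeasure ≤ 1 := by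
    rw [← hf.integral_one]
    apply setIntegral_le_integral hf.integrable
    filter_upwards with p using hf.nonneg p.1 p.2
  have hSreal : (cylMeasure S).toReal = Real.pi * Real.pi := by
    rw [hcylS, ENNReal.toReal_mul, ENNReal.toReal_ofReal hπ.le]
  rw [measureReal_def, hSreal, smul_eq_mul] at hge
  nlinarith
end Aux7
open Set Filter in
set_option maxHeartbeats 1000000 in
/-- Exponential dephasing towards a fixed analytic asymptotically free state
(Theorem 1 of the paper). -/
theorem exponential_dephasing
    (l : ℝ) (hl : 0 < l) (f : ℝ → ℝ → ℝ) (hf : IsCylDensity f)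
    (M : ℝ) (hM : ∀ (k : ℤ) (η : ℝ),
      ‖fHat f k η‖ * Real.exp (l * (|(k : ℝ)| + |η|)) ≤ M)
    (hreg : ContDiff ℝ 1 (fun p : ℝ × ℝ => f p.1 p.2))
    (hgrad : ∃ K : ℝ, ∀ p : ℝ × ℝ, ‖fderiv ℝ (fun q : ℝ × ℝ => f q.1 q.2) p‖ ≤ K) :
    ∃ μ₀ > (0 : ℝ), ∀ μ : ℝ, 0 < μ → μ < μ₀ →
      ∃ (z : ℝ → ℂ) (Θ : ℝ → ℝ → ℝ → ℝ) (C : ℝ),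
        Measurable z ∧ IsAsymChar μ z Θ ∧ 0 < C ∧
        (∀ t : ℝ, 0 ≤ t → z t = orderParam f Θ t) ∧
        (∀ t : ℝ, 0 ≤ t → ‖z t‖ ≤ C * Real.exp (-l * t)) ∧
        (∀ t : ℝ, 0 ≤ t → ∀ ϑ ω : ℝ, |Θ t ϑ ω - ϑ - ω * t| ≤ C * Real.exp (-l * t)) ∧
        (∀ t : ℝ, 0 ≤ t → ∀ ϑ ω : ℝ,
          |f ϑ ω * Real.exp (-μ * ∫ s in Set.Ioi t,
              (Complex.exp (Complex.I * (Θ s ϑ ω : ℂ)) * (starRingEnd ℂ) (z s)).re)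
            - f (Θ t ϑ ω - ω * t) ω| ≤ C * Real.exp (-l * t)) := by
  obtain ⟨K, hK⟩ := hgrad
  have hM0 : 0 ≤ M := M_nonneg hM
  have hD : (0:ℝ) < (M + 2) * (2 * l + 4) := by nlinarith
  refine ⟨l^2 / ((M + 2) * (2 * l + 4)), div_pos (by positivity) hD, ?_⟩
  intro μ hμ hμlt
  have hsm : μ * ((M + 2) * (2 * l + 4)) ≤ l ^ 2 :=
    le_of_lt ((lt_div_iff₀ hD).mp hμlt)
  have hμM1 : μ * (M + 1) ≤ l / 2 := by nlinarith
  set K' := max K 1 with hK'_def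
  have hK'1 : (1:ℝ) ≤ K' := le_max_right _ _
  have hπ : (0:ℝ) < Real.pi := Real.pi_pos
  have hg : Good l (eL μ f) := eL_good hl hf hM hμ hsm
  have hfix := eL_fix hl hf hM hμ hsm
  set C : ℝ := (M + 2) + 2 * Real.pi * K' + K' with hC_def
  have hCpos : 0 < C := by nlinarith
  refine ⟨zOf f (eL μ f), fun t ϑ ω => ϑ + ω * t + eL μ f t ϑ ω, C,
    (zOf_cont hl hf hg).measurable, ?_, hCpos, ?_, ?_, ?_, ?_⟩
  · -- IsAsymChar
    intro t ht ϑ ω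
    have h := hfix t ϑ ω
    rw [nextE] at h
    rw [max_eq_left ht] at h
    show ϑ + ω * t + eL μ f t ϑ ω = _
    rw [h]
    rfl
  · -- z = orderParam
    intro t _
    rfl
  · -- decay of z
    intro t ht
    have h := zOf_bound hl hf hM hg t
    rw [max_eq_left ht] at h
    refine h.trans (mul_le_mul_of_nonneg_right ?_ (Real.exp_nonneg _))
    nlinarith
  · -- Θ close to free flow
    intro t ht ϑ ω
    have he : (ϑ + ω * t + eL μ f t ϑ ω) - ϑ - ω * t = eL μ f t ϑ ω := by ring
    rw [he]
    have h := hg.bdd t ϑ ω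
    rw [max_eq_left ht] at h
    refine h.trans (mul_le_mul_of_nonneg_right ?_ (Real.exp_nonneg _))
    nlinarith
  · -- the density estimate
    intro t ht ϑ ω
    have hmv : ∀ x y : ℝ × ℝ, |f x.1 x.2 - f y.1 y.2| ≤ K' * ‖x - y‖ := by
      intro x y
      have := Convex.norm_image_sub_le_of_norm_fderiv_le
        (f := fun p : ℝ × ℝ => f p.1 p.2) (C := K')
        (fun p _ => (hreg.differentiable one_ne_zero).differentiableAt)
        (fun p _ => le_trans (hK p) (le_max_left _ _)) convex_univ (mem_univ y) (mem_univ x)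
      simpa [Real.norm_eq_abs] using this
    have hFmax : ∀ ϑ' ω' : ℝ, f ϑ' ω' ≤ 2 * Real.pi * K' := f_bdd hf hreg hK
    set e := eL μ f t ϑ ω with he_def
    set I := ∫ s in Set.Ioi t,
      (Complex.exp (Complex.I * ((ϑ + ω * s + eL μ f s ϑ ω : ℝ) : ℂ)) *
        (starRingEnd ℂ) (zOf f (eL μ f) s)).re with hI_def
    have hIle : |I| ≤ (M + 1) * (Real.exp (-l * t) / l) :=
      int_Ioi_g_le hl hf hM hg ϑ ω ht (fun w => Complex.abs_re_le_norm w)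
    have hEt : Real.exp (-l * t) ≤ 1 := Real.exp_le_one_iff.mpr (by nlinarith)
    have hE0 : 0 ≤ Real.exp (-l * t) := Real.exp_nonneg _
    have hμI : |(-μ) * I| ≤ (1/2) * Real.exp (-l * t) := by
      rw [abs_mul, abs_neg, abs_of_pos hμ]
      calc μ * |I| ≤ μ * ((M + 1) * (Real.exp (-l * t) / l)) :=
            mul_le_mul_of_nonneg_left hIle hμ.le
      _ = (μ * (M + 1)) * Real.exp (-l * t) / l := by ring
      _ ≤ (1/2) * Real.exp (-l * t) := by
          rw [div_le_iff₀ hl]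
          nlinarith [mul_le_mul_of_nonneg_right hμM1 hE0]
    have hμI1 : |(-μ) * I| ≤ 1 := hμI.trans (by nlinarith)
    have hexp1 : |Real.exp ((-μ) * I) - 1| ≤ 2 * |(-μ) * I| := Real.abs_exp_sub_one_le hμI1
    have hθ : (ϑ + ω * t + e) - ω * t = ϑ + e := by ring
    show |f ϑ ω * Real.exp (-μ * I) - f ((ϑ + ω * t + e) - ω * t) ω| ≤ C * Real.exp (-l * t)
    rw [hθ]
    have hsplit : f ϑ ω * Real.exp (-μ * I) - f (ϑ + e) ω
        = f ϑ ω * (Real.exp ((-μ) * I) - 1) + (f ϑ ω - f (ϑ + e) ω) := by ring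
    rw [hsplit]
    have hterm1 : |f ϑ ω * (Real.exp ((-μ) * I) - 1)| ≤ (2 * Real.pi * K') * Real.exp (-l * t) := by
      rw [abs_mul, abs_of_nonneg (hf.nonneg _ _)]
      calc f ϑ ω * |Real.exp ((-μ) * I) - 1| ≤ (2 * Real.pi * K') * (2 * |(-μ) * I|) := by
            apply mul_le_mul (hFmax ϑ ω) hexp1 (abs_nonneg _) (by positivity)
      _ ≤ (2 * Real.pi * K') * Real.exp (-l * t) := by
            apply mul_le_mul_of_nonneg_left _ (by positivity)
            nlinarith [hμI]
    have hterm2 : |f ϑ ω - f (ϑ + e) ω| ≤ K' * Real.exp (-l * t) := by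
      have h := hmv (ϑ, ω) (ϑ + e, ω)
      have hnorm : ‖((ϑ, ω) : ℝ × ℝ) - (ϑ + e, ω)‖ = |e| := by
        rw [Prod.norm_def]
        simp [Real.norm_eq_abs, abs_neg]
      rw [hnorm] at h
      have hbe : |e| ≤ (1/2) * Real.exp (-l * t) := by
        have h2 := hg.bdd t ϑ ω
        rwa [max_eq_left ht] at h2
      calc |f ϑ ω - f (ϑ + e) ω| ≤ K' * |e| := h
      _ ≤ K' * ((1/2) * Real.exp (-l * t)) :=
            mul_le_mul_of_nonneg_left hbe (by positivity)
      _ ≤ K' * Real.exp (-l * t) := by nlinarith [mul_le_mul_of_nonneg_right hK'1 hE0]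
    have htri := abs_add_le (f ϑ ω * (Real.exp ((-μ) * I) - 1)) (f ϑ ω - f (ϑ + e) ω)
    have hfin : (2 * Real.pi * K') * Real.exp (-l * t) + K' * Real.exp (-l * t)
        ≤ C * Real.exp (-l * t) := by nlinarith
    linarith
end
end

section
/- Let λ>0, μ>0 and let z:[0,∞)→ℂ be measurable with ‖z‖_λ < ∞. If Θ:[0,∞)×ℝ×ℝ→ℝ satisfies ‖Θ(t,ϑ,ω) − ϑ − ωt‖_λ < ∞, then ‖F_z(Θ)(t,ϑ,ω) − ϑ − ωt‖_λ ≤ (μ/λ)‖z‖_λ. -/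
open MeasureTheory

noncomputable section

/-- Weighted sup-norm `sup_{t ≥ 0} |z t| e^{l t}` for `z : ℝ → ℂ`. -/
def expNormZ (l : ℝ) (z : ℝ → ℂ) : ℝ :=
  ⨆ t : {t : ℝ // 0 ≤ t}, ‖z t.1‖ * Real.exp (l * t.1)

/-- Finiteness of the weighted sup-norm for `z : ℝ → ℂ`. -/
def ExpBddZ (l : ℝ) (z : ℝ → ℂ) : Prop :=
  BddAbove (Set.range fun t : {t : ℝ // 0 ≤ t} => ‖z t.1‖ * Real.exp (l * t.1))

/-- Weighted sup-norm `sup_{t ≥ 0, ϑ, ω} |h t ϑ ω| e^{l t}`. -/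
def expNormH (l : ℝ) (h : ℝ → ℝ → ℝ → ℂ) : ℝ :=
  ⨆ p : {t : ℝ // 0 ≤ t} × ℝ × ℝ, ‖h p.1.1 p.2.1 p.2.2‖ * Real.exp (l * p.1.1)

/-- Finiteness of the weighted sup-norm for `h`. -/
def ExpBddH (l : ℝ) (h : ℝ → ℝ → ℝ → ℂ) : Prop :=
  BddAbove (Set.range fun p : {t : ℝ // 0 ≤ t} × ℝ × ℝ =>
    ‖h p.1.1 p.2.1 p.2.2‖ * Real.exp (l * p.1.1))

/-- The functional `F_z(Θ)(t,ϑ,ω) = ϑ + ωt + μ ∫_t^∞ Im(e^{iΘ(s,ϑ,ω)} conj(z s)) ds`. -/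
def Fz (μ : ℝ) (z : ℝ → ℂ) (Θ : ℝ → ℝ → ℝ → ℝ) (t ϑ ω : ℝ) : ℝ :=
  ϑ + ω * t + μ * ∫ s in Set.Ioi t,
    (Complex.exp (Complex.I * (Θ s ϑ ω : ℂ)) * (starRingEnd ℂ) (z s)).im

open Filter in
lemma integral_exp_neg_mul_Ioi' {l : ℝ} (hl : 0 < l) (t : ℝ) :
    ∫ s in Set.Ioi t, Real.exp (-(l * s)) = Real.exp (-(l * t)) / l := by
  have hderiv : ∀ x ∈ Set.Ici t,
      HasDerivAt (fun s => -Real.exp (-(l * s)) / l) (Real.exp (-(l * x))) x := by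
    intro x _
    have h1 : HasDerivAt (fun s : ℝ => -(l * s)) (-l) x := by
      simpa using ((hasDerivAt_id x).const_mul l).fun_neg
    have h2 := (Real.hasDerivAt_exp (-(l * x))).comp x h1
    have h3 := h2.neg.div_const l
    refine h3.congr_deriv ?_
    field_simp [hl.ne']
  have hint : IntegrableOn (fun s => Real.exp (-(l * s))) (Set.Ioi t) := by
    simpa [neg_mul] using exp_neg_integrableOn_Ioi t hl
  have hmul : Tendsto (fun s : ℝ => -(l * s)) atTop atBot :=
    tendsto_neg_atTop_atBot.comp ((tendsto_const_mul_atTop_of_pos hl).2 tendsto_id)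
  have htend : Tendsto (fun s => -Real.exp (-(l * s)) / l) atTop (nhds 0) := by
    have := (Real.tendsto_exp_atBot.comp hmul).neg.div_const l
    simpa using this
  have := integral_Ioi_of_hasDerivAt_of_tendsto' hderiv hint htend
  rw [this]; ring

lemma zbound {l : ℝ} {z : ℝ → ℂ} (hzb : ExpBddZ l z) {s : ℝ} (hs : 0 ≤ s) :
    ‖z s‖ ≤ expNormZ l z * Real.exp (-(l * s)) := by
  have h := le_ciSup hzb (⟨s, hs⟩ : {t : ℝ // 0 ≤ t})
  have he : (0:ℝ) < Real.exp (l * s) := Real.exp_pos _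
  rw [Real.exp_neg, ← div_eq_mul_inv, le_div_iff₀ he]
  exact h

/-- `F_z` maps the affine space `ϑ + ωt + X_λ` into itself, with the stated bound. -/
theorem Fz_maps_expSpace
    (l μ : ℝ) (hl : 0 < l) (hμ : 0 < μ) (z : ℝ → ℂ) (hz : Measurable z)
    (hzb : ExpBddZ l z) (Θ : ℝ → ℝ → ℝ → ℝ)
    (hΘ : ExpBddH l (fun t ϑ ω => ((Θ t ϑ ω - ϑ - ω * t : ℝ) : ℂ))) :
    expNormH l (fun t ϑ ω => ((Fz μ z Θ t ϑ ω - ϑ - ω * t : ℝ) : ℂ)) ≤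
      μ / l * expNormZ l z := by
  have hC0 : (0:ℝ) ≤ expNormZ l z :=
    le_trans (by positivity) (le_ciSup hzb (⟨0, le_refl 0⟩ : {t : ℝ // 0 ≤ t}))
  set C := expNormZ l z with hC
  apply ciSup_le
  rintro ⟨⟨t, ht⟩, ϑ, ω⟩
  simp only [Complex.norm_real, Real.norm_eq_abs]
  have hFz : Fz μ z Θ t ϑ ω - ϑ - ω * t
      = μ * ∫ s in Set.Ioi t,
        (Complex.exp (Complex.I * (Θ s ϑ ω : ℂ)) * (starRingEnd ℂ) (z s)).im := by
    simp [Fz]; ring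
  rw [hFz, abs_mul, abs_of_pos hμ]
  have hg : IntegrableOn (fun s => C * Real.exp (-(l * s))) (Set.Ioi t) := by
    have := (exp_neg_integrableOn_Ioi t hl).const_mul C
    simpa [neg_mul, IntegrableOn] using this
  have hbound : |∫ s in Set.Ioi t,
      (Complex.exp (Complex.I * (Θ s ϑ ω : ℂ)) * (starRingEnd ℂ) (z s)).im|
      ≤ C * (Real.exp (-(l * t)) / l) := by
    have h1 : ‖∫ s in Set.Ioi t,
        (Complex.exp (Complex.I * (Θ s ϑ ω : ℂ)) * (starRingEnd ℂ) (z s)).im‖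
        ≤ ∫ s in Set.Ioi t, C * Real.exp (-(l * s)) := by
      apply norm_integral_le_of_norm_le hg
      rw [ae_restrict_iff' measurableSet_Ioi]
      filter_upwards with s hs
      have hs0 : 0 ≤ s := le_trans ht (le_of_lt hs)
      have h2 : ‖(Complex.exp (Complex.I * (Θ s ϑ ω : ℂ)) * (starRingEnd ℂ) (z s)).im‖
          ≤ ‖z s‖ := by
        rw [Real.norm_eq_abs]
        calc |(Complex.exp (Complex.I * (Θ s ϑ ω : ℂ)) * (starRingEnd ℂ) (z s)).im|
            ≤ ‖Complex.exp (Complex.I * (Θ s ϑ ω : ℂ)) * (starRingEnd ℂ) (z s)‖ :=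
              Complex.abs_im_le_norm _
          _ = ‖z s‖ := by
              rw [norm_mul, Complex.norm_conj, Complex.norm_exp]
              simp [Complex.mul_re]
      exact h2.trans (zbound hzb hs0)
    calc |∫ s in Set.Ioi t,
        (Complex.exp (Complex.I * (Θ s ϑ ω : ℂ)) * (starRingEnd ℂ) (z s)).im|
        ≤ ∫ s in Set.Ioi t, C * Real.exp (-(l * s)) := h1
      _ = C * (Real.exp (-(l * t)) / l) := by
          rw [MeasureTheory.integral_const_mul, integral_exp_neg_mul_Ioi' hl]
  have hexp : Real.exp (-(l * t)) * Real.exp (l * t) = 1 := by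
    rw [← Real.exp_add]; simp
  calc μ * |∫ s in Set.Ioi t,
      (Complex.exp (Complex.I * (Θ s ϑ ω : ℂ)) * (starRingEnd ℂ) (z s)).im| * Real.exp (l * t)
      ≤ μ * (C * (Real.exp (-(l * t)) / l)) * Real.exp (l * t) := by gcongr
    _ = μ / l * C * (Real.exp (-(l * t)) * Real.exp (l * t)) := by ring
    _ = μ / l * C := by rw [hexp, mul_one]
end
end

section
/- Let λ>0, μ>0 and let z:[0,∞)→ℂ be measurable with μ‖z‖_λ < λ. Then there exists a unique map Θ:[0,∞)×ℝ×ℝ→ℝ with ‖Θ(t,ϑ,ω) − ϑ − ωt‖_λ < ∞ which is an asymptotic characteristic for z, and it satisfies ‖Θ(t,ϑ,ω) − ϑ − ωt‖_λ ≤ (μ/λ)‖z‖_λ. -/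
open MeasureTheory

noncomputable section

namespace AsymAux

open Set Real

/-- The integrand as a function of the angle `a` and time `s`. -/
noncomputable def phi (z : ℝ → ℂ) (a s : ℝ) : ℝ :=
  (Complex.exp (Complex.I * (a : ℂ)) * (starRingEnd ℂ) (z s)).im

lemma abs_exp_I_mul (a : ℝ) : ‖Complex.exp (Complex.I * (a:ℂ))‖ = 1 := by
  rw [Complex.norm_exp]
  simp

theorem phi_abs_le (z : ℝ → ℂ) (a s : ℝ) : |phi z a s| ≤ ‖z s‖ := by
  calc |phi z a s| ≤ ‖Complex.exp (Complex.I * (a:ℂ)) * (starRingEnd ℂ) (z s)‖ :=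
        Complex.abs_im_le_norm _
    _ = ‖z s‖ := by rw [norm_mul, abs_exp_I_mul, one_mul, Complex.norm_conj]

theorem lipschitz_cexp : LipschitzWith 1 (fun a : ℝ => Complex.exp (Complex.I * (a:ℂ))) := by
  have hd : ∀ a : ℝ, HasDerivAt (fun a : ℝ => Complex.exp (Complex.I * (a:ℂ)))
      (Complex.I * Complex.exp (Complex.I * (a:ℂ))) a := by
    intro a
    have h1 : HasDerivAt (fun a : ℝ => Complex.I * (a:ℂ)) Complex.I a := by
      simpa using (Complex.ofRealCLM.hasDerivAt (x := a)).const_mul Complex.I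
    simpa [mul_comm] using h1.cexp
  apply lipschitzWith_of_nnnorm_deriv_le (fun a => (hd a).differentiableAt)
  intro x
  rw [(hd x).deriv]
  simp only [nnnorm_mul]
  rw [← NNReal.coe_le_coe]
  push_cast
  simp only [abs_exp_I_mul, Complex.norm_I]
  norm_num

theorem phi_lip (z : ℝ → ℂ) (a b s : ℝ) :
    |phi z a s - phi z b s| ≤ |a - b| * ‖z s‖ := by
  have h1 : phi z a s - phi z b s
      = ((Complex.exp (Complex.I * (a:ℂ)) - Complex.exp (Complex.I * (b:ℂ)))
          * (starRingEnd ℂ) (z s)).im := by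
    simp [phi, sub_mul]
  rw [h1]
  calc |((Complex.exp (Complex.I * (a:ℂ)) - Complex.exp (Complex.I * (b:ℂ)))
          * (starRingEnd ℂ) (z s)).im|
      ≤ ‖(Complex.exp (Complex.I * (a:ℂ)) - Complex.exp (Complex.I * (b:ℂ)))
          * (starRingEnd ℂ) (z s)‖ := Complex.abs_im_le_norm _
    _ = ‖Complex.exp (Complex.I * (a:ℂ)) - Complex.exp (Complex.I * (b:ℂ))‖
          * ‖z s‖ := by rw [norm_mul, Complex.norm_conj]
    _ ≤ |a - b| * ‖z s‖ := by
        gcongr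
        have := lipschitz_cexp.dist_le_mul a b
        simpa [Complex.dist_eq, Real.dist_eq] using this

theorem phi_meas {z : ℝ → ℂ} (hz : Measurable z) {c : ℝ → ℝ} (hc : Measurable c) :
    Measurable fun s => phi z (c s) s := by
  apply Complex.measurable_im.comp
  exact (Complex.measurable_exp.comp
    (measurable_const.mul (Complex.measurable_ofReal.comp hc))).mul
    (Complex.continuous_conj.measurable.comp hz)

/-- The index type, with the discrete topology. -/
structure Idx where
  t : ℝ
  th : ℝ
  om : ℝ

instance : TopologicalSpace Idx := ⊥
instance : DiscreteTopology Idx := ⟨rfl⟩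
instance : Nonempty Idx := ⟨⟨0, 0, 0⟩⟩

/-- The Banach space of bounded functions on `Idx`. -/
abbrev E := BoundedContinuousFunction Idx ℝ

/-- Measurability in the time variable. -/
def Meas (w : E) : Prop := ∀ ϑ ω : ℝ, Measurable fun s : ℝ => w ⟨s, ϑ, ω⟩

theorem isClosed_meas : IsClosed {w : E | Meas w} := by
  refine IsSeqClosed.isClosed ?_
  intro x w hx hlim ϑ ω
  refine measurable_of_tendsto_metrizable (fun n => hx n ϑ ω) ?_
  rw [tendsto_pi_nhds]
  intro s
  exact ((continuous_eval_const
    (x := (⟨s, ϑ, ω⟩ : Idx))).tendsto w).comp hlim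

/-- The complete space on which the fixed-point argument runs. -/
abbrev S := {w : E // Meas w}

instance : CompleteSpace S := isClosed_meas.completeSpace_coe
instance : Nonempty S := ⟨⟨0, fun ϑ ω => by simpa using measurable_const⟩⟩

noncomputable def cut (f : ℝ → ℝ) (s : ℝ) : ℝ := if 0 ≤ s then f s else 0

theorem cut_abs_le {f g : ℝ → ℝ} (hf : ∀ s, 0 ≤ s → |f s| ≤ g s) (hg : ∀ s, 0 ≤ g s) (s : ℝ) :
    |cut f s| ≤ g s := by
  unfold cut; split
  · exact hf s ‹_›
  · simpa using hg s

section core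
variable {l μ K : ℝ} {z : ℝ → ℂ}

theorem intExp (a : ℝ) (hl : 0 < l) :
    ∫ x in Ioi a, Real.exp (-(l * x)) = Real.exp (-(l * a)) / l := by
  have hd : ∀ x ∈ Ici a, HasDerivAt (fun x => -Real.exp (-(l*x)) / l) (Real.exp (-(l*x))) x := by
    intro x _
    have h1 : HasDerivAt (fun x : ℝ => -(l*x)) (-l) x := by
      simpa [Pi.neg_def] using ((hasDerivAt_id x).const_mul l).neg
    have h2 := (h1.exp).neg.div_const l
    refine h2.congr_deriv ?_
    field_simp
  have hi : IntegrableOn (fun x => Real.exp (-(l*x))) (Ioi a) :=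
    (exp_neg_integrableOn_Ioi a hl).congr_fun (fun x _ => by simp only [neg_mul]) measurableSet_Ioi
  have ht : Filter.Tendsto (fun x => -Real.exp (-(l*x)) / l) Filter.atTop (nhds 0) := by
    rw [show (0:ℝ) = -0/l by simp]
    refine (Filter.Tendsto.neg ?_).div_const l
    have h3 : Filter.Tendsto (fun x : ℝ => -(l*x)) Filter.atTop Filter.atBot := by
      simpa [neg_mul] using
        Filter.Tendsto.const_mul_atTop_of_neg (by linarith : -l < 0) Filter.tendsto_id
    exact Real.tendsto_exp_atBot.comp h3
  have := integral_Ioi_of_hasDerivAt_of_tendsto' hd hi ht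
  rw [this]; ring_nf

theorem intExpOn (a : ℝ) (hl : 0 < l) :
    IntegrableOn (fun x => Real.exp (-(l * x))) (Ioi a) :=
  (exp_neg_integrableOn_Ioi a hl).congr_fun (fun x _ => by simp only [neg_mul]) measurableSet_Ioi

theorem cutphi_integrableOn (hl : 0 < l) (hz : Measurable z)
    (hK : ∀ s : ℝ, 0 ≤ s → ‖z s‖ ≤ K * Real.exp (-(l * s)))
    (c : ℝ → ℝ) (hc : Measurable c) (t : ℝ) :
    IntegrableOn (cut fun s => phi z (c s) s) (Ioi t) := by
  refine Integrable.mono' ((intExpOn t hl).const_mul K) ?_ ?_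
  · apply Measurable.aestronglyMeasurable
    exact Measurable.ite measurableSet_Ici (phi_meas hz hc) measurable_const
  · refine Filter.Eventually.of_forall fun s => ?_
    rw [Real.norm_eq_abs]
    refine cut_abs_le (fun s hs => (phi_abs_le z _ s).trans (hK s hs)) (fun s => ?_) s
    have : 0 ≤ K := by
      have := (norm_nonneg (z 0)).trans (hK 0 le_rfl)
      nlinarith [Real.exp_pos (-(l * 0))]
    positivity

theorem integral_abs_bound (hl : 0 < l) {g : ℝ → ℝ} {t : ℝ} {C : ℝ}
    (hg : IntegrableOn g (Ioi t)) (hgb : ∀ s, t < s → |g s| ≤ C * Real.exp (-(l * s))) :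
    |∫ s in Ioi t, g s| ≤ C * (Real.exp (-(l * t)) / l) := by
  calc |∫ s in Ioi t, g s| ≤ ∫ s in Ioi t, |g s| := by
        simpa [Real.norm_eq_abs] using
          norm_integral_le_integral_norm g (μ := volume.restrict (Ioi t))
    _ ≤ ∫ s in Ioi t, C * Real.exp (-(l * s)) := by
        refine setIntegral_mono_on hg.abs ((intExpOn t hl).const_mul C) measurableSet_Ioi ?_
        intro s hs; exact hgb s hs
    _ = C * (Real.exp (-(l * t)) / l) := by rw [MeasureTheory.integral_const_mul, intExp t hl]

variable (l z)

noncomputable def ang (ϑ ω : ℝ) (w : E) (s : ℝ) : ℝ :=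
  ϑ + ω * s + Real.exp (-(l * s)) * w ⟨s, ϑ, ω⟩

noncomputable def G (ϑ ω : ℝ) (w : E) : ℝ → ℝ := cut fun s => phi z (ang l ϑ ω w s) s

variable (μ) in
noncomputable def Fmap (w : E) : Idx → ℝ := fun p =>
  if 0 ≤ p.t then μ * Real.exp (l * p.t) * ∫ s in Ioi p.t, G l z p.th p.om w s else 0

variable {l z}

theorem ang_meas (ϑ ω : ℝ) {w : E} (hw : Meas w) : Measurable (ang l ϑ ω w) := by
  unfold ang
  exact (measurable_const.add (measurable_const.mul measurable_id)).add
    (((measurable_id.const_mul l).neg.exp).mul (hw ϑ ω))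

theorem G_integrableOn (hl : 0 < l) (hz : Measurable z)
    (hK : ∀ s : ℝ, 0 ≤ s → ‖z s‖ ≤ K * Real.exp (-(l * s)))
    (ϑ ω : ℝ) {w : E} (hw : Meas w) (t : ℝ) :
    IntegrableOn (G l z ϑ ω w) (Ioi t) :=
  cutphi_integrableOn hl hz hK _ (ang_meas ϑ ω hw) t

theorem Fmap_abs_le (hl : 0 < l) (hμ : 0 < μ) (hz : Measurable z) (hK0 : 0 ≤ K)
    (hK : ∀ s : ℝ, 0 ≤ s → ‖z s‖ ≤ K * Real.exp (-(l * s)))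
    {w : E} (hw : Meas w) (p : Idx) : |Fmap l μ z w p| ≤ μ * K / l := by
  unfold Fmap
  split
  · rename_i ht
    have hb := integral_abs_bound hl (g := G l z p.th p.om w) (t := p.t) (C := K)
      (G_integrableOn hl hz hK _ _ hw p.t)
      (fun s hs => cut_abs_le (fun s hs' => (phi_abs_le z _ s).trans (hK s hs'))
        (fun s => by positivity) s)
    rw [abs_mul, abs_mul]
    rw [abs_of_nonneg hμ.le, abs_of_nonneg (Real.exp_pos _).le]
    calc μ * Real.exp (l * p.t) * |∫ s in Ioi p.t, G l z p.th p.om w s|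
        ≤ μ * Real.exp (l * p.t) * (K * (Real.exp (-(l * p.t)) / l)) := by
          gcongr
      _ = μ * K / l * (Real.exp (l * p.t) * Real.exp (-(l * p.t))) := by ring
      _ = μ * K / l := by rw [← Real.exp_add]; simp
  · have : 0 ≤ μ * K / l := by positivity
    simpa using this

theorem Fmap_meas (hl : 0 < l) (hz : Measurable z)
    (hK : ∀ s : ℝ, 0 ≤ s → ‖z s‖ ≤ K * Real.exp (-(l * s)))
    {w : E} (hw : Meas w) (ϑ ω : ℝ) :
    Measurable fun s : ℝ => Fmap l μ z w ⟨s, ϑ, ω⟩ := by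
  have hint : ∀ t : ℝ, IntegrableOn (G l z ϑ ω w) (Ioi t) := G_integrableOn hl hz hK ϑ ω hw
  have hii : ∀ a b : ℝ, IntervalIntegrable (G l z ϑ ω w) volume a b := by
    intro a b
    rw [intervalIntegrable_iff]
    exact (hint (a ⊓ b)).mono_set Set.Ioc_subset_Ioi_self
  set J : ℝ → ℝ := fun t =>
    (∫ s in Ioi (0:ℝ), G l z ϑ ω w s) - ∫ u in (0:ℝ)..t, G l z ϑ ω w u with hJdef
  have hJcont : Continuous J :=
    continuous_const.sub (intervalIntegral.continuous_primitive hii 0)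
  have hJ : ∀ t : ℝ, 0 ≤ t → (∫ s in Ioi t, G l z ϑ ω w s) = J t := by
    intro t ht
    have hsplit : (∫ s in Ioi (0:ℝ), G l z ϑ ω w s)
        = (∫ s in Ioc 0 t, G l z ϑ ω w s) + ∫ s in Ioi t, G l z ϑ ω w s := by
      rw [← setIntegral_union (Set.Ioc_disjoint_Ioi le_rfl) measurableSet_Ioi
        ((hint 0).mono_set Set.Ioc_subset_Ioi_self) (hint t),
        Set.Ioc_union_Ioi_eq_Ioi ht]
    rw [hJdef]
    simp only
    rw [intervalIntegral.integral_of_le ht, hsplit]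
    ring
  have : (fun s : ℝ => Fmap l μ z w ⟨s, ϑ, ω⟩)
      = fun s => if 0 ≤ s then μ * Real.exp (l * s) * J s else 0 := by
    funext s
    unfold Fmap
    simp only
    split
    · rw [hJ s ‹_›]
    · rfl
  rw [this]
  exact Measurable.ite measurableSet_Ici
    ((measurable_const.mul ((measurable_id.const_mul l).exp)).mul hJcont.measurable)
    measurable_const

theorem Fmap_contract (hl : 0 < l) (hμ : 0 < μ) (hz : Measurable z) (hK0 : 0 ≤ K)
    (hK : ∀ s : ℝ, 0 ≤ s → ‖z s‖ ≤ K * Real.exp (-(l * s)))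
    {w w' : E} (hw : Meas w) (hw' : Meas w') (p : Idx) :
    dist (Fmap l μ z w p) (Fmap l μ z w' p) ≤ μ * K / (2 * l) * dist w w' := by
  have hd0 : (0:ℝ) ≤ dist w w' := dist_nonneg
  have hcoef : 0 ≤ μ * K / (2 * l) := by positivity
  unfold Fmap
  rw [Real.dist_eq]
  split
  · rename_i ht
    have h2l : 0 < 2 * l := by linarith
    have hdiff : ∀ s : ℝ, p.t < s →
        |G l z p.th p.om w s - G l z p.th p.om w' s|
          ≤ K * dist w w' * Real.exp (-(2 * l * s)) := by
      intro s hs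
      have hs0 : 0 ≤ s := le_of_lt (lt_of_le_of_lt ht hs)
      unfold G cut
      rw [if_pos hs0, if_pos hs0]
      calc |phi z (ang l p.th p.om w s) s - phi z (ang l p.th p.om w' s) s|
          ≤ |ang l p.th p.om w s - ang l p.th p.om w' s| * ‖z s‖ :=
            phi_lip z _ _ s
        _ ≤ (Real.exp (-(l * s)) * dist w w') * (K * Real.exp (-(l * s))) := by
            have h1 : |ang l p.th p.om w s - ang l p.th p.om w' s|
                = Real.exp (-(l * s)) * |w ⟨s, p.th, p.om⟩ - w' ⟨s, p.th, p.om⟩| := by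
              unfold ang
              rw [show p.th + p.om * s + Real.exp (-(l * s)) * w ⟨s, p.th, p.om⟩
                  - (p.th + p.om * s + Real.exp (-(l * s)) * w' ⟨s, p.th, p.om⟩)
                  = Real.exp (-(l * s)) * (w ⟨s, p.th, p.om⟩ - w' ⟨s, p.th, p.om⟩) by ring,
                abs_mul, abs_of_nonneg (Real.exp_pos _).le]
            rw [h1]
            have hwd : |w ⟨s, p.th, p.om⟩ - w' ⟨s, p.th, p.om⟩| ≤ dist w w' := by
              rw [← Real.dist_eq]
              exact BoundedContinuousFunction.dist_coe_le_dist _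
            exact mul_le_mul
              (mul_le_mul_of_nonneg_left hwd (Real.exp_pos _).le)
              (hK s hs0) (norm_nonneg _) (by positivity)
        _ = K * dist w w' * Real.exp (-(2 * l * s)) := by
            rw [show -(2 * l * s) = -(l * s) + -(l * s) by ring, Real.exp_add]
            ring
    have hint1 := G_integrableOn hl hz hK p.th p.om hw p.t
    have hint2 := G_integrableOn hl hz hK p.th p.om hw' p.t
    have key : |(∫ s in Ioi p.t, G l z p.th p.om w s) - ∫ s in Ioi p.t, G l z p.th p.om w' s|
        ≤ K * dist w w' * (Real.exp (-(2 * l * p.t)) / (2 * l)) := by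
      rw [← integral_sub hint1 hint2]
      exact integral_abs_bound h2l (hint1.sub hint2) hdiff
    calc |(μ * Real.exp (l * p.t) * ∫ s in Ioi p.t, G l z p.th p.om w s)
          - μ * Real.exp (l * p.t) * ∫ s in Ioi p.t, G l z p.th p.om w' s|
        = μ * Real.exp (l * p.t)
          * |(∫ s in Ioi p.t, G l z p.th p.om w s) - ∫ s in Ioi p.t, G l z p.th p.om w' s| := by
          rw [← mul_sub, abs_mul, abs_mul, abs_of_nonneg hμ.le,
            abs_of_nonneg (Real.exp_pos _).le]
      _ ≤ μ * Real.exp (l * p.t) * (K * dist w w' * (Real.exp (-(2 * l * p.t)) / (2 * l))) := by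
          gcongr
      _ = μ * K / (2 * l) * dist w w' * (Real.exp (l * p.t) * Real.exp (-(2 * l * p.t))) := by
          ring
      _ = μ * K / (2 * l) * dist w w' * Real.exp (-(l * p.t)) := by
          rw [← Real.exp_add]; ring_nf
      _ ≤ μ * K / (2 * l) * dist w w' * 1 := by
          refine mul_le_mul_of_nonneg_left ?_ (by positivity)
          rw [Real.exp_le_one_iff]
          nlinarith
      _ = μ * K / (2 * l) * dist w w' := by ring
  · simpa using mul_nonneg hcoef hd0

theorem aesm_boot (hz : Measurable z) (ϑ ω : ℝ) (Θ' : ℝ → ℝ)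
    (hch : ∀ t, 0 ≤ t → Θ' t = ϑ + ω * t + μ * ∫ s in Ioi t, phi z (Θ' s) s) :
    ∀ t : ℝ, 0 ≤ t →
      AEStronglyMeasurable (fun s => phi z (Θ' s) s) (volume.restrict (Ioi t)) := by
  set f' : ℝ → ℝ := fun s => phi z (Θ' s) s with hf'
  have hgmeas : Measurable fun s => phi z (ϑ + ω * s) s :=
    phi_meas hz (measurable_const.add (measurable_const.mul measurable_id))
  have mono : ∀ {a b : ℝ}, a ≤ b → AEStronglyMeasurable f' (volume.restrict (Ioi a)) →
      AEStronglyMeasurable f' (volume.restrict (Ioi b)) := fun hab h =>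
    h.mono_measure (Measure.restrict_mono (Ioi_subset_Ioi hab) le_rfl)
  suffices h0 : AEStronglyMeasurable f' (volume.restrict (Ioi 0)) by
    intro t ht; exact mono ht h0
  by_contra h0
  have key : ∀ t : ℝ, ¬ AEStronglyMeasurable f' (volume.restrict (Ioi t)) →
      ∀ r, 0 ≤ r → r ≤ t → Θ' r = ϑ + ω * r := by
    intro t hP r hr hrt
    have hPr : ¬ AEStronglyMeasurable f' (volume.restrict (Ioi r)) := fun h => hP (mono hrt h)
    have hni : ¬ IntegrableOn f' (Ioi r) := fun h => hPr h.aestronglyMeasurable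
    rw [hch r hr, integral_undef hni]
    ring
  set B : Set ℝ := {t | 0 ≤ t ∧ ¬ AEStronglyMeasurable f' (volume.restrict (Ioi t))} with hB
  have hB0 : (0:ℝ) ∈ B := ⟨le_rfl, h0⟩
  by_cases hBdd : BddAbove B
  · set τ := sSup B with hτ
    have hτ0 : 0 ≤ τ := le_csSup hBdd hB0
    have hPgt : ∀ t, τ < t → AEStronglyMeasurable f' (volume.restrict (Ioi t)) := by
      intro t htt
      by_contra hP
      exact absurd (le_csSup hBdd ⟨hτ0.trans htt.le, hP⟩) (not_le.mpr htt)
    have hPτ : AEStronglyMeasurable f' (volume.restrict (Ioi τ)) := by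
      have hU : Ioi τ = ⋃ n : ℕ, Ioi (τ + ((n:ℝ) + 1)⁻¹) := by
        ext x
        simp only [mem_Ioi, mem_iUnion]
        constructor
        · intro hx
          obtain ⟨n, hn⟩ := exists_nat_one_div_lt (sub_pos.mpr hx)
          exact ⟨n, by rw [one_div] at hn; linarith⟩
        · rintro ⟨n, hn⟩
          have : (0:ℝ) < ((n:ℝ) + 1)⁻¹ := by positivity
          linarith
      rw [hU, aestronglyMeasurable_iUnion_iff]
      intro n
      exact hPgt _ (lt_add_of_pos_right _ (by positivity))
    have haff : ∀ r, 0 ≤ r → r < τ → Θ' r = ϑ + ω * r := by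
      intro r hr hrτ
      obtain ⟨t', ht'B, hrt'⟩ := exists_lt_of_lt_csSup ⟨0, hB0⟩ hrτ
      exact key t' ht'B.2 r hr hrt'.le
    apply h0
    have hsplit : Ioi (0:ℝ) = Ioc 0 τ ∪ Ioi τ := (Ioc_union_Ioi_eq_Ioi hτ0).symm
    rw [hsplit, aestronglyMeasurable_union_iff]
    refine ⟨?_, hPτ⟩
    have hres : volume.restrict (Ioc (0:ℝ) τ) = volume.restrict (Ioo (0:ℝ) τ) :=
      (Measure.restrict_congr_set Ioo_ae_eq_Ioc).symm
    rw [hres]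
    refine hgmeas.aestronglyMeasurable.congr ?_
    refine (ae_restrict_iff' measurableSet_Ioo).mpr (Filter.Eventually.of_forall fun s hs => ?_)
    rw [hf']
    simp only
    rw [haff s hs.1.le hs.2]
  · have haff : ∀ r, 0 ≤ r → Θ' r = ϑ + ω * r := by
      intro r hr
      obtain ⟨y, hyB, hry⟩ := not_bddAbove_iff.mp hBdd r
      exact key y hyB.2 r hr hry.le
    apply h0
    refine hgmeas.aestronglyMeasurable.congr ?_
    refine (ae_restrict_iff' measurableSet_Ioi).mpr (Filter.Eventually.of_forall fun s hs => ?_)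
    rw [hf']
    simp only
    rw [haff s (le_of_lt hs)]

end core
end AsymAux

/-- Existence and uniqueness of the asymptotic characteristic for `z`, with the
bound `‖Θ - ϑ - ωt‖_λ ≤ (μ/λ)‖z‖_λ`. -/
theorem asymChar_exists_unique_exp
    (l μ : ℝ) (hl : 0 < l) (hμ : 0 < μ) (z : ℝ → ℂ) (hz : Measurable z)
    (hzb : ExpBddZ l z) (hsmall : μ * expNormZ l z < l) :
    ∃ Θ : ℝ → ℝ → ℝ → ℝ,
      ExpBddH l (fun t ϑ ω => ((Θ t ϑ ω - ϑ - ω * t : ℝ) : ℂ)) ∧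
      IsAsymChar μ z Θ ∧
      expNormH l (fun t ϑ ω => ((Θ t ϑ ω - ϑ - ω * t : ℝ) : ℂ)) ≤ μ / l * expNormZ l z ∧
      ∀ Θ' : ℝ → ℝ → ℝ → ℝ,
        ExpBddH l (fun t ϑ ω => ((Θ' t ϑ ω - ϑ - ω * t : ℝ) : ℂ)) →
        IsAsymChar μ z Θ' →
        ∀ t : ℝ, 0 ≤ t → ∀ ϑ ω : ℝ, Θ' t ϑ ω = Θ t ϑ ω := by
  classical
  open Set Real in
  haveI : Nonempty ({t : ℝ // 0 ≤ t} × ℝ × ℝ) := ⟨⟨⟨0, le_rfl⟩, 0, 0⟩⟩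
  set K := expNormZ l z with hKdef
  have hK0 : 0 ≤ K := by
    have h := le_ciSup hzb (⟨0, le_rfl⟩ : {t : ℝ // 0 ≤ t})
    have h2 : (0:ℝ) ≤ ‖z 0‖ * Real.exp (l * 0) := by positivity
    exact h2.trans h
  have hK : ∀ s : ℝ, 0 ≤ s → ‖z s‖ ≤ K * Real.exp (-(l * s)) := by
    intro s hs
    have h := le_ciSup hzb (⟨s, hs⟩ : {t : ℝ // 0 ≤ t})
    calc ‖z s‖ = ‖z s‖ * Real.exp (l * s) * Real.exp (-(l * s)) := by
          rw [mul_assoc, ← Real.exp_add]; simp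
      _ ≤ K * Real.exp (-(l * s)) := mul_le_mul_of_nonneg_right h (Real.exp_pos _).le
  -- the contraction on the complete space S
  let Fm : AsymAux.S → AsymAux.S := fun w =>
    ⟨BoundedContinuousFunction.ofNormedAddCommGroup (AsymAux.Fmap l μ z w.1)
      continuous_of_discreteTopology (μ * K / l)
      (fun p => by rw [Real.norm_eq_abs]; exact AsymAux.Fmap_abs_le hl hμ hz hK0 hK w.2 p),
      fun ϑ ω => AsymAux.Fmap_meas hl hz hK w.2 ϑ ω⟩
  have hFmcoe : ∀ (w : AsymAux.S) (p : AsymAux.Idx),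
      (Fm w).1 p = AsymAux.Fmap l μ z w.1 p := fun w p => rfl
  have hc : ContractingWith ⟨μ * K / (2 * l), by positivity⟩ Fm := by
    constructor
    · apply NNReal.coe_lt_coe.mp
      push_cast
      change μ * K / (2 * l) < 1
      rw [div_lt_one (by linarith)]
      linarith
    · refine LipschitzWith.of_dist_le_mul fun w w' => ?_
      rw [Subtype.dist_eq, Subtype.dist_eq w w']
      refine (BoundedContinuousFunction.dist_le (mul_nonneg (NNReal.coe_nonneg _) dist_nonneg)).mpr fun p => ?_
      rw [hFmcoe, hFmcoe]
      exact AsymAux.Fmap_contract hl hμ hz hK0 hK w.2 w'.2 p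
  set w₀ : AsymAux.S := ContractingWith.fixedPoint Fm hc with hw₀
  have hfix : Fm w₀ = w₀ := hc.fixedPoint_isFixedPt
  set W : AsymAux.Idx → ℝ := fun p => w₀.1 p with hW
  have happly : ∀ p : AsymAux.Idx, 0 ≤ p.t →
      W p = μ * Real.exp (l * p.t) * ∫ s in Set.Ioi p.t, AsymAux.G l z p.th p.om w₀.1 s := by
    intro p hp
    have h := congrArg (fun v : AsymAux.S => v.1 p) hfix
    rw [hW]
    simp only
    rw [← h, hFmcoe]
    unfold AsymAux.Fmap
    rw [if_pos hp]
  have hWb : ∀ p : AsymAux.Idx, |W p| ≤ μ * K / l := by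
    intro p
    have h := congrArg (fun v : AsymAux.S => v.1 p) hfix
    rw [hW]
    simp only
    rw [← h, hFmcoe]
    exact AsymAux.Fmap_abs_le hl hμ hz hK0 hK w₀.2 p
  set Θ : ℝ → ℝ → ℝ → ℝ :=
    fun t ϑ ω => ϑ + ω * t + Real.exp (-(l * t)) * W ⟨t, ϑ, ω⟩ with hΘ
  have hsub : ∀ t ϑ ω : ℝ, Θ t ϑ ω - ϑ - ω * t = Real.exp (-(l * t)) * W ⟨t, ϑ, ω⟩ := by
    intro t ϑ ω; rw [hΘ]; ring
  have habs : ∀ t ϑ ω : ℝ, 0 ≤ t →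
      |Θ t ϑ ω - ϑ - ω * t| * Real.exp (l * t) ≤ μ * K / l := by
    intro t ϑ ω ht
    rw [hsub, abs_mul, abs_of_nonneg (Real.exp_pos _).le]
    calc Real.exp (-(l * t)) * |W ⟨t, ϑ, ω⟩| * Real.exp (l * t)
        = |W ⟨t, ϑ, ω⟩| * (Real.exp (-(l * t)) * Real.exp (l * t)) := by ring
      _ = |W ⟨t, ϑ, ω⟩| := by rw [← Real.exp_add]; simp
      _ ≤ μ * K / l := hWb _
  have hAC : IsAsymChar μ z Θ := by
    intro t ht ϑ ω
    have hcongr : (∫ s in Set.Ioi t, AsymAux.G l z ϑ ω w₀.1 s)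
        = ∫ s in Set.Ioi t, (Complex.exp (Complex.I * (Θ s ϑ ω : ℂ))
            * (starRingEnd ℂ) (z s)).im := by
      refine setIntegral_congr_fun measurableSet_Ioi fun s hs => ?_
      unfold AsymAux.G AsymAux.cut
      rw [if_pos (ht.trans (le_of_lt hs))]
      rfl
    rw [hΘ]
    simp only
    rw [happly ⟨t, ϑ, ω⟩ ht]
    simp only
    rw [hcongr]
    rw [show Real.exp (-(l * t)) * (μ * Real.exp (l * t)
        * ∫ s in Set.Ioi t, (Complex.exp (Complex.I * (Θ s ϑ ω : ℂ))
            * (starRingEnd ℂ) (z s)).im)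
      = μ * (Real.exp (-(l * t)) * Real.exp (l * t))
        * ∫ s in Set.Ioi t, (Complex.exp (Complex.I * (Θ s ϑ ω : ℂ))
            * (starRingEnd ℂ) (z s)).im by ring, ← Real.exp_add, neg_add_cancel,
      Real.exp_zero, mul_one]
  refine ⟨Θ, ?_, hAC, ?_, ?_⟩
  · refine ⟨μ * K / l, ?_⟩
    rintro x ⟨p, rfl⟩
    simp only [Complex.norm_real, Real.norm_eq_abs]
    exact habs p.1.1 p.2.1 p.2.2 p.1.2
  · unfold expNormH
    refine ciSup_le fun p => ?_
    simp only [Complex.norm_real, Real.norm_eq_abs]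
    calc |Θ p.1.1 p.2.1 p.2.2 - p.2.1 - p.2.2 * p.1.1| * Real.exp (l * p.1.1)
        ≤ μ * K / l := habs p.1.1 p.2.1 p.2.2 p.1.2
      _ = μ / l * K := by ring
  · -- uniqueness
    intro Θ' hb' hch' t ht ϑ ω
    obtain ⟨C', hC'⟩ := hb'
    set f' : ℝ → ℝ := fun s => AsymAux.phi z (Θ' s ϑ ω) s with hf'
    set f₂ : ℝ → ℝ := fun s => AsymAux.phi z (Θ s ϑ ω) s with hf₂
    have hch'' : ∀ r : ℝ, 0 ≤ r → Θ' r ϑ ω = ϑ + ω * r + μ * ∫ s in Set.Ioi r, f' s :=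
      fun r hr => hch' r hr ϑ ω
    have hch2 : ∀ r : ℝ, 0 ≤ r → Θ r ϑ ω = ϑ + ω * r + μ * ∫ s in Set.Ioi r, f₂ s :=
      fun r hr => hAC r hr ϑ ω
    have haesm := AsymAux.aesm_boot (μ := μ) hz ϑ ω (fun s => Θ' s ϑ ω) hch''
    have hfint : ∀ r : ℝ, 0 ≤ r → IntegrableOn f' (Set.Ioi r) := by
      intro r hr
      refine Integrable.mono' ((AsymAux.intExpOn r hl).const_mul K) (haesm r hr) ?_
      refine (ae_restrict_iff' measurableSet_Ioi).mpr
        (Filter.Eventually.of_forall fun s hs => ?_)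
      rw [Real.norm_eq_abs]
      exact (AsymAux.phi_abs_le z _ s).trans (hK s (hr.trans (le_of_lt hs)))
    have hΘmeas : Measurable fun s => Θ s ϑ ω := by
      rw [hΘ]
      exact (measurable_const.add (measurable_const.mul measurable_id)).add
        (((measurable_id.const_mul l).neg.exp).mul (w₀.2 ϑ ω))
    have hf₂int : ∀ r : ℝ, 0 ≤ r → IntegrableOn f₂ (Set.Ioi r) := by
      intro r hr
      refine Integrable.mono' ((AsymAux.intExpOn r hl).const_mul K)
        (AsymAux.phi_meas hz hΘmeas).aestronglyMeasurable ?_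
      refine (ae_restrict_iff' measurableSet_Ioi).mpr
        (Filter.Eventually.of_forall fun s hs => ?_)
      rw [Real.norm_eq_abs]
      exact (AsymAux.phi_abs_le z _ s).trans (hK s (hr.trans (le_of_lt hs)))
    set D : ℝ → ℝ := fun r => |Θ' r ϑ ω - Θ r ϑ ω| with hD
    have hDb : ∀ r : ℝ, 0 ≤ r → D r * Real.exp (l * r) ≤ C' + μ * K / l := by
      intro r hr
      have h1 : |Θ' r ϑ ω - ϑ - ω * r| * Real.exp (l * r) ≤ C' := by
        have h0 := hC' (Set.mem_range_self (⟨⟨r, hr⟩, ϑ, ω⟩ : {t : ℝ // 0 ≤ t} × ℝ × ℝ))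
        simp only [Complex.norm_real, Real.norm_eq_abs] at h0
        exact h0
      have h2 : |Θ r ϑ ω - ϑ - ω * r| * Real.exp (l * r) ≤ μ * K / l := habs r ϑ ω hr
      have h3 : D r ≤ |Θ' r ϑ ω - ϑ - ω * r| + |Θ r ϑ ω - ϑ - ω * r| := by
        rw [hD]
        simp only
        rw [show Θ' r ϑ ω - Θ r ϑ ω
            = (Θ' r ϑ ω - ϑ - ω * r) - (Θ r ϑ ω - ϑ - ω * r) by ring]
        exact abs_sub _ _
      nlinarith [Real.exp_pos (l * r)]
    set M : ℝ := ⨆ r : {r : ℝ // 0 ≤ r}, D r.1 * Real.exp (l * r.1) with hM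
    have hMbdd : BddAbove (Set.range fun r : {r : ℝ // 0 ≤ r} => D r.1 * Real.exp (l * r.1)) :=
      ⟨C' + μ * K / l, by rintro x ⟨r, rfl⟩; exact hDb r.1 r.2⟩
    have hM0 : 0 ≤ M := by
      have := le_ciSup hMbdd (⟨0, le_rfl⟩ : {r : ℝ // 0 ≤ r})
      have h2 : (0:ℝ) ≤ D 0 * Real.exp (l * 0) := by positivity
      exact h2.trans this
    have hMle : ∀ r : ℝ, 0 ≤ r → D r ≤ M * Real.exp (-(l * r)) := by
      intro r hr
      have h := le_ciSup hMbdd (⟨r, hr⟩ : {r : ℝ // 0 ≤ r})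
      calc D r = D r * Real.exp (l * r) * Real.exp (-(l * r)) := by
            rw [mul_assoc, ← Real.exp_add]; simp
        _ ≤ M * Real.exp (-(l * r)) := mul_le_mul_of_nonneg_right h (Real.exp_pos _).le
    have hest : ∀ r : ℝ, 0 ≤ r → D r * Real.exp (l * r) ≤ μ * K / (2 * l) * M := by
      intro r hr
      have h2l : 0 < 2 * l := by linarith
      have hkey : |(∫ s in Set.Ioi r, f' s) - ∫ s in Set.Ioi r, f₂ s|
          ≤ M * K * (Real.exp (-(2 * l * r)) / (2 * l)) := by
        rw [← integral_sub (hfint r hr) (hf₂int r hr)]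
        refine AsymAux.integral_abs_bound h2l ((hfint r hr).sub (hf₂int r hr)) fun s hs => ?_
        have hs0 : 0 ≤ s := hr.trans (le_of_lt hs)
        calc |f' s - f₂ s| ≤ |Θ' s ϑ ω - Θ s ϑ ω| * ‖z s‖ :=
              AsymAux.phi_lip z _ _ s
          _ ≤ (M * Real.exp (-(l * s))) * (K * Real.exp (-(l * s))) :=
              mul_le_mul (hMle s hs0) (hK s hs0) (norm_nonneg _)
                (by positivity)
          _ = M * K * Real.exp (-(2 * l * s)) := by
              rw [show -(2 * l * s) = -(l * s) + -(l * s) by ring, Real.exp_add]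
              ring
      have hDr : D r = μ * |(∫ s in Set.Ioi r, f' s) - ∫ s in Set.Ioi r, f₂ s| := by
        rw [hD]
        simp only
        rw [hch'' r hr, hch2 r hr,
          show ϑ + ω * r + μ * (∫ s in Set.Ioi r, f' s)
            - (ϑ + ω * r + μ * ∫ s in Set.Ioi r, f₂ s)
            = μ * ((∫ s in Set.Ioi r, f' s) - ∫ s in Set.Ioi r, f₂ s) by ring,
          abs_mul, abs_of_nonneg hμ.le]
      calc D r * Real.exp (l * r)
          ≤ μ * (M * K * (Real.exp (-(2 * l * r)) / (2 * l))) * Real.exp (l * r) := by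
            rw [hDr]
            refine mul_le_mul_of_nonneg_right (mul_le_mul_of_nonneg_left hkey hμ.le)
              (Real.exp_pos _).le
        _ = μ * K / (2 * l) * M * (Real.exp (-(2 * l * r)) * Real.exp (l * r)) := by ring
        _ = μ * K / (2 * l) * M * Real.exp (-(l * r)) := by rw [← Real.exp_add]; ring_nf
        _ ≤ μ * K / (2 * l) * M * 1 := by
            refine mul_le_mul_of_nonneg_left ?_ (by positivity)
            rw [Real.exp_le_one_iff]
            nlinarith
        _ = μ * K / (2 * l) * M := by ring
    have hMc : M ≤ μ * K / (2 * l) * M := ciSup_le fun r => hest r.1 r.2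
    have hc1 : μ * K / (2 * l) < 1 := by
      rw [div_lt_one (by linarith)]
      linarith
    have hMz : M ≤ 0 := by nlinarith
    have hDt : D t * Real.exp (l * t) ≤ 0 :=
      (le_ciSup hMbdd (⟨t, ht⟩ : {r : ℝ // 0 ≤ r})).trans hMz
    have hD0 : D t = 0 := by
      have h1 : 0 ≤ D t := abs_nonneg _
      nlinarith [Real.exp_pos (l * t)]
    have := abs_eq_zero.mp hD0
    linarith [this]
end
end
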